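/- arXiv:2512.05324 — 15 statements merged into one kernel-verified Lean document; each statement's English description precedes it below -/
import Mathlib

section
/- Let X, Y ⊂ R^n be nonempty closed convex sets, let y ∈ Y, let α ∈ (0,1), and set z := αy + (1−α)P_X(y). Then ⟨z − P_X(z), z − P_Y(z)⟩ ≤ 0, i.e., z is centralized relative to (X,Y). -/
open Metric Filter Topology
open scoped RealInnerProductSpace

theorem stmt_1 {n : ℕ} {X Y : Set (EuclideanSpace ℝ (Fin n))}
    (hXne : X.Nonempty) (hXc : IsClosed X) (hXconv : Convex ℝ X)
    (hYne : Y.Nonempty) (hYc : IsClosed Y) (hYconv : Convex ℝ Y)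
    (PX PY : EuclideanSpace ℝ (Fin n) → EuclideanSpace ℝ (Fin n))
    (hPX : ∀ u, PX u ∈ X ∧ ∀ x ∈ X, ⟪u - PX u, x - PX u⟫ ≤ 0)
    (hPY : ∀ u, PY u ∈ Y ∧ ∀ x ∈ Y, ⟪u - PY u, x - PY u⟫ ≤ 0)
    (y : EuclideanSpace ℝ (Fin n)) (hy : y ∈ Y)
    (α : ℝ) (hα : α ∈ Set.Ioo (0:ℝ) 1) :
    ⟪(α • y + (1 - α) • PX y) - PX (α • y + (1 - α) • PX y),
      (α • y + (1 - α) • PX y) - PY (α • y + (1 - α) • PX y)⟫ ≤ 0 := by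
  obtain ⟨hα0, hα1⟩ := hα
  set p := PX y with hp
  set z := α • y + (1 - α) • p with hz
  have hzp : z - p = α • (y - p) := by rw [hz]; module
  have hpX : p ∈ X := (hPX y).1
  have hvp : ∀ x ∈ X, ⟪z - p, x - p⟫ ≤ 0 := by
    intro x hx
    rw [hzp, inner_smul_left]
    have h := (hPX y).2 x hx
    have : (starRingEnd ℝ) α = α := rfl
    rw [this]
    nlinarith
  have hq := hPX z
  have h1 : ⟪z - PX z, p - PX z⟫ ≤ 0 := hq.2 p hpX
  have h2 : ⟪z - p, PX z - p⟫ ≤ 0 := hvp (PX z) hq.1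
  have hpe : PX z = p := by
    have key : ⟪p - PX z, p - PX z⟫ ≤ 0 := by
      have e : (p : EuclideanSpace ℝ (Fin n)) - PX z = (z - PX z) - (z - p) := by abel
      calc ⟪p - PX z, p - PX z⟫ = ⟪z - PX z, p - PX z⟫ - ⟪z - p, p - PX z⟫ := by
            rw [e, inner_sub_left]
        _ ≤ 0 := by
            have : ⟪z - p, p - PX z⟫ = -⟪z - p, PX z - p⟫ := by
              rw [← inner_neg_right]; congr 1; abel
            linarith [h1, h2, this ▸ (neg_nonneg.mpr h2)]
    have : p - PX z = 0 := by
      have := real_inner_self_nonneg (x := p - PX z)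
      have hz0 : ⟪p - PX z, p - PX z⟫ = 0 := le_antisymm key this
      exact inner_self_eq_zero.mp hz0
    have := sub_eq_zero.mp this
    exact this.symm
  rw [hpe, hzp]
  have hy1 : ⟪z - PY z, y - PY z⟫ ≤ 0 := (hPY z).2 y hy
  have edec : y - PY z = (z - PY z) + (1 - α) • (y - p) := by rw [hz]; module
  rw [edec, inner_add_right, real_inner_smul_right] at hy1
  rw [real_inner_smul_left, real_inner_comm]
  nlinarith [real_inner_self_nonneg (x := z - PY z)]
end

section
/- Let X, Y ⊂ R^n be nonempty closed convex sets, let y ∈ Y, let α ∈ (0,1), and set z := αy + (1−α)P_X(y). If ⟨z − P_X(z), z − P_Y(z)⟩ = 0 (i.e., z is centralized but not strictly centralized), then z ∈ Y. -/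
open Metric Filter Topology
open scoped RealInnerProductSpace

theorem stmt_2 {n : ℕ} {X Y : Set (EuclideanSpace ℝ (Fin n))}
    (hXne : X.Nonempty) (hXc : IsClosed X) (hXconv : Convex ℝ X)
    (hYne : Y.Nonempty) (hYc : IsClosed Y) (hYconv : Convex ℝ Y)
    (PX PY : EuclideanSpace ℝ (Fin n) → EuclideanSpace ℝ (Fin n))
    (hPX : ∀ u, PX u ∈ X ∧ ∀ x ∈ X, ⟪u - PX u, x - PX u⟫ ≤ 0)
    (hPY : ∀ u, PY u ∈ Y ∧ ∀ x ∈ Y, ⟪u - PY u, x - PY u⟫ ≤ 0)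
    (y : EuclideanSpace ℝ (Fin n)) (hy : y ∈ Y)
    (α : ℝ) (hα : α ∈ Set.Ioo (0:ℝ) 1)
    (z : EuclideanSpace ℝ (Fin n)) (hz : z = α • y + (1 - α) • PX y)
    (heq : ⟪z - PX z, z - PY z⟫ = 0) :
    z ∈ Y := by
  obtain ⟨hα0, hα1⟩ := hα
  have hz' : z - PX y = α • (y - PX y) := by rw [hz]; module
  -- PX z = PX y
  have hPXz : PX z = PX y := by
    have h1 : ⟪z - PX z, PX y - PX z⟫ ≤ 0 := (hPX z).2 (PX y) (hPX y).1
    have h2 : ⟪z - PX y, PX z - PX y⟫ ≤ 0 := by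
      have h3 : ⟪y - PX y, PX z - PX y⟫ ≤ 0 := (hPX y).2 (PX z) (hPX z).1
      rw [hz', real_inner_smul_left]
      nlinarith
    have hkey : ⟪PX z - PX y, PX z - PX y⟫ ≤ 0 := by
      have e1 : ⟪PX z - PX y, PX z - PX y⟫
          = ⟪z - PX y, PX z - PX y⟫ - ⟪z - PX z, PX z - PX y⟫ := by
        rw [← inner_sub_left]; congr 1; abel
      have e3 : ⟪z - PX z, PX z - PX y⟫ = -⟪z - PX z, PX y - PX z⟫ := by
        rw [show (PX z - PX y : EuclideanSpace ℝ (Fin n)) = -(PX y - PX z) by abel,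
          inner_neg_right]
      linarith
    have := real_inner_self_nonpos.mp hkey
    exact sub_eq_zero.mp this
  -- deduce inner product zero
  have hinner : ⟪y - PX y, z - PY z⟫ = 0 := by
    rw [hPXz, hz', real_inner_smul_left] at heq
    rcases mul_eq_zero.mp heq with h | h
    · exact absurd h (ne_of_gt hα0)
    · exact h
  -- variational inequality for PY z at y
  have hvy : ⟪z - PY z, y - PY z⟫ ≤ 0 := (hPY z).2 y hy
  have hy' : y - PY z = (z - PY z) + (1 - α) • (y - PX y) := by
    rw [hz]; module
  have hfinal : ⟪z - PY z, z - PY z⟫ ≤ 0 := by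
    have e : ⟪z - PY z, y - PY z⟫
        = ⟪z - PY z, z - PY z⟫ + (1 - α) * ⟪z - PY z, y - PX y⟫ := by
      rw [hy', inner_add_right, real_inner_smul_right]
    have hsymm : ⟪z - PY z, y - PX y⟫ = 0 := by
      rw [real_inner_comm]; exact hinner
    rw [e, hsymm] at hvy; linarith
  have : z - PY z = 0 := real_inner_self_nonpos.mp hfinal
  have hzPY : z = PY z := sub_eq_zero.mp this
  rw [hzPY]; exact (hPY z).1
end

section
/- Let X, Y ⊂ R^n be nonempty closed convex sets with S := X ∩ Y nonempty. Let y ∈ P_Y(X) \ S (i.e., y = P_Y(x) for some x ∈ X, and y ∉ S), let α ∈ (0,1), and set z := αy + (1−α)P_X(y). Then ⟨z − P_X(z), z − P_Y(z)⟩ < 0, i.e., z is strictly centralized relative to (X,Y). -/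
open Metric Filter Topology
open scoped RealInnerProductSpace

theorem stmt_3 {n : ℕ} {X Y : Set (EuclideanSpace ℝ (Fin n))}
    (hXne : X.Nonempty) (hXc : IsClosed X) (hXconv : Convex ℝ X)
    (hYne : Y.Nonempty) (hYc : IsClosed Y) (hYconv : Convex ℝ Y)
    (hS : (X ∩ Y).Nonempty)
    (PX PY : EuclideanSpace ℝ (Fin n) → EuclideanSpace ℝ (Fin n))
    (hPX : ∀ u, PX u ∈ X ∧ ∀ x ∈ X, ⟪u - PX u, x - PX u⟫ ≤ 0)
    (hPY : ∀ u, PY u ∈ Y ∧ ∀ x ∈ Y, ⟪u - PY u, x - PY u⟫ ≤ 0)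
    (y : EuclideanSpace ℝ (Fin n)) (hy : y ∈ (PY '' X) \ (X ∩ Y))
    (α : ℝ) (hα : α ∈ Set.Ioo (0:ℝ) 1)
    (z : EuclideanSpace ℝ (Fin n)) (hz : z = α • y + (1 - α) • PX y) :
    ⟪z - PX z, z - PY z⟫ < 0 := by
  obtain ⟨⟨x, hxX, hxy⟩, hyS⟩ := hy
  obtain ⟨hα0, hα1⟩ := hα
  have hβ : (0:ℝ) < 1 - α := by linarith
  have hyY : y ∈ Y := hxy ▸ (hPY x).1
  set p := PX y with hp
  have hpX : p ∈ X := (hPX y).1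
  have hyX : y ∉ X := fun h => hyS ⟨h, hyY⟩
  have hyp : y ≠ p := fun h => hyX (h ▸ hpX)
  have hypn : (0:ℝ) < ⟪y - p, y - p⟫ := by
    have h0 : (0:ℝ) < ‖y - p‖ := norm_pos_iff.mpr (sub_ne_zero.mpr hyp)
    rw [real_inner_self_eq_norm_sq]; positivity
  -- z - p = α • (y - p)
  have hzp : z - p = α • (y - p) := by rw [hz]; module
  -- y - z = (1-α) • (y - p)
  have hyz : y - z = (1 - α) • (y - p) := by rw [hz]; module
  -- every point of X satisfies the variational inequality at p for z
  have h1 : ∀ x' ∈ X, ⟪z - p, x' - p⟫ ≤ 0 := by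
    intro x' hx'
    rw [hzp, real_inner_smul_left]
    exact mul_nonpos_of_nonneg_of_nonpos hα0.le ((hPX y).2 x' hx')
  -- hence PX z = p
  have hPXz : PX z = p := by
    have ha := (hPX z).2 p hpX
    have hb := h1 (PX z) (hPX z).1
    have key : ⟪p - PX z, p - PX z⟫ ≤ 0 := by
      have hsum : ⟪p - PX z, p - PX z⟫
          = ⟪z - PX z, p - PX z⟫ + ⟪z - p, PX z - p⟫ := by
        simp only [inner_sub_left, inner_sub_right, real_inner_comm]
        ring
      linarith
    have hn2 : ‖p - PX z‖ ^ 2 ≤ 0 := by rwa [← real_inner_self_eq_norm_sq]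
    have hn : ‖p - PX z‖ = 0 := by nlinarith [norm_nonneg (p - PX z)]
    have : p - PX z = 0 := norm_eq_zero.mp hn
    exact (sub_eq_zero.mp this).symm
  set q := PY z with hq
  have hqY : q ∈ Y := (hPY z).1
  have hA : ⟪z - q, y - q⟫ ≤ 0 := (hPY z).2 y hyY
  -- expand: y - q = (1-α) • (y - p) + (z - q)
  have hyq : y - q = (1 - α) • (y - p) + (z - q) := by
    rw [hz]; module
  have hA' : (1 - α) * ⟪z - q, y - p⟫ + ⟪z - q, z - q⟫ ≤ 0 := by
    have := hA
    rw [hyq, inner_add_right, real_inner_smul_right] at this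
    linarith
  by_cases hzq : z = q
  · -- then z ∈ Y, contradiction with y = PY x and p = PX y
    exfalso
    have hzY : z ∈ Y := hzq ▸ hqY
    have hB : ⟪x - y, z - y⟫ ≤ 0 := by
      have := (hPY x).2 z hzY
      rwa [hxy] at this
    have hB' : (1 - α) * ⟪x - y, y - p⟫ ≥ 0 := by
      have hzy : z - y = -((1 - α) • (y - p)) := by rw [hz]; module
      rw [hzy, inner_neg_right, real_inner_smul_right] at hB
      linarith
    have hC : ⟪y - p, x - p⟫ ≤ 0 := (hPX y).2 x hxX
    have hexp : ⟪y - p, x - p⟫ = ⟪x - y, y - p⟫ + ⟪y - p, y - p⟫ := by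
      simp only [inner_sub_left, inner_sub_right, real_inner_comm]
      ring
    nlinarith
  · -- z ≠ q, strict inequality
    have hzqpos : (0:ℝ) < ⟪z - q, z - q⟫ := by
      have h0 : (0:ℝ) < ‖z - q‖ := norm_pos_iff.mpr (sub_ne_zero.mpr hzq)
      rw [real_inner_self_eq_norm_sq]; positivity
    have hlt : ⟪z - q, y - p⟫ < 0 := by nlinarith
    have : z - PX z = α • (y - p) := by rw [hPXz]; exact hzp
    rw [this, real_inner_smul_left]
    have : ⟪y - p, z - q⟫ < 0 := by rwa [real_inner_comm] at hlt
    exact mul_neg_of_pos_of_neg hα0 this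
end

section
/- Let S ⊂ R^n be nonempty and let (z_k) be a sequence that is Fejér monotone with respect to S (i.e., ‖z_{k+1} − s‖ ≤ ‖z_k − s‖ for all s ∈ S and all k). If dist(z_k, X) → 0 and dist(z_k, Y) → 0 for closed sets X, Y with S = X ∩ Y ≠ ∅, then (z_k) converges to some point of S. -/
open Metric Filter Topology
open scoped RealInnerProductSpace

theorem stmt_5 {n : ℕ} {X Y S : Set (EuclideanSpace ℝ (Fin n))}
    (hXc : IsClosed X) (hYc : IsClosed Y) (hSdef : S = X ∩ Y) (hSne : S.Nonempty)
    (z : ℕ → EuclideanSpace ℝ (Fin n))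
    (hFejer : ∀ s ∈ S, ∀ k : ℕ, ‖z (k+1) - s‖ ≤ ‖z k - s‖)
    (hdX : Tendsto (fun k => infDist (z k) X) atTop (𝓝 0))
    (hdY : Tendsto (fun k => infDist (z k) Y) atTop (𝓝 0)) :
    ∃ p ∈ S, Tendsto z atTop (𝓝 p) := by
  obtain ⟨s₀, hs₀⟩ := hSne
  -- the sequence is bounded
  have hanti : ∀ s ∈ S, Antitone (fun k => ‖z k - s‖) := fun s hs =>
    antitone_nat_of_succ_le (fun k => hFejer s hs k)
  have hmem : ∀ k, z k ∈ closedBall s₀ ‖z 0 - s₀‖ := by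
    intro k
    simp only [mem_closedBall, dist_eq_norm]
    exact hanti s₀ hs₀ (Nat.zero_le k)
  -- extract a convergent subsequence
  obtain ⟨p, hpB, φ, hφmono, hφtend⟩ :=
    (isCompact_closedBall s₀ ‖z 0 - s₀‖).tendsto_subseq hmem
  -- p ∈ S
  have hXne : X.Nonempty := ⟨s₀, (hSdef ▸ hs₀).1⟩
  have hYne : Y.Nonempty := ⟨s₀, (hSdef ▸ hs₀).2⟩
  have hpX : p ∈ X := by
    have h1 : Tendsto (fun k => infDist (z (φ k)) X) atTop (𝓝 (infDist p X)) :=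
      ((continuous_infDist_pt X).continuousAt.tendsto).comp hφtend
    have h2 : Tendsto (fun k => infDist (z (φ k)) X) atTop (𝓝 0) :=
      hdX.comp hφmono.tendsto_atTop
    have := tendsto_nhds_unique h1 h2
    exact (hXc.mem_iff_infDist_zero hXne).mpr this
  have hpY : p ∈ Y := by
    have h1 : Tendsto (fun k => infDist (z (φ k)) Y) atTop (𝓝 (infDist p Y)) :=
      ((continuous_infDist_pt Y).continuousAt.tendsto).comp hφtend
    have h2 : Tendsto (fun k => infDist (z (φ k)) Y) atTop (𝓝 0) :=
      hdY.comp hφmono.tendsto_atTop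
    have := tendsto_nhds_unique h1 h2
    exact (hYc.mem_iff_infDist_zero hYne).mpr this
  have hpS : p ∈ S := hSdef ▸ ⟨hpX, hpY⟩
  refine ⟨p, hpS, ?_⟩
  -- the antitone sequence ‖z k - p‖ has a subsequence tending to 0, hence tends to 0
  have hA : Antitone (fun k => ‖z k - p‖) := hanti p hpS
  have hbdd : BddBelow (Set.range fun k => ‖z k - p‖) :=
    ⟨0, fun x ⟨k, hk⟩ => hk ▸ norm_nonneg _⟩
  have hlim : Tendsto (fun k => ‖z k - p‖) atTop (𝓝 (⨅ k, ‖z k - p‖)) :=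
    tendsto_atTop_ciInf hA hbdd
  have hsub0 : Tendsto (fun k => ‖z (φ k) - p‖) atTop (𝓝 0) := by
    have := (tendsto_iff_norm_sub_tendsto_zero.mp hφtend)
    simpa using this
  have hsub : Tendsto (fun k => ‖z (φ k) - p‖) atTop (𝓝 (⨅ k, ‖z k - p‖)) :=
    hlim.comp hφmono.tendsto_atTop
  have hinf0 : (⨅ k, ‖z k - p‖) = 0 := tendsto_nhds_unique hsub hsub0
  rw [tendsto_iff_norm_sub_tendsto_zero]
  exact hinf0 ▸ hlim
end

section
/- Let S ⊂ R^n be nonempty and let (z_k) be Fejér monotone with respect to S. If (z_k) converges to a point z̄, then for every k, dist(z_k, S) ≥ (1/2)‖z_k − z̄‖. -/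
open Metric Filter Topology
open scoped RealInnerProductSpace

theorem stmt_6 {n : ℕ} {S : Set (EuclideanSpace ℝ (Fin n))} (hSne : S.Nonempty)
    (z : ℕ → EuclideanSpace ℝ (Fin n))
    (hFejer : ∀ s ∈ S, ∀ k : ℕ, ‖z (k+1) - s‖ ≤ ‖z k - s‖)
    (zbar : EuclideanSpace ℝ (Fin n)) (hlim : Tendsto z atTop (𝓝 zbar)) :
    ∀ k : ℕ, (1/2 : ℝ) * ‖z k - zbar‖ ≤ infDist (z k) S := by
  intro k
  rw [← not_lt, infDist_lt_iff hSne]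
  rintro ⟨s, hs, hds⟩
  rw [dist_eq_norm] at hds
  -- monotonicity: ∀ m, ‖z (k+m) - s‖ ≤ ‖z k - s‖
  have hmono : ∀ m : ℕ, ‖z (k + m) - s‖ ≤ ‖z k - s‖ := by
    intro m
    induction m with
    | zero => simp
    | succ m ih => exact le_trans (hFejer s hs (k + m)) ih
  have hlim' : Tendsto (fun m : ℕ => ‖z (k + m) - s‖) atTop (𝓝 (‖zbar - s‖)) := by
    have : Tendsto (fun m : ℕ => z (k + m)) atTop (𝓝 zbar) :=
      hlim.comp (tendsto_atTop_mono (fun m => Nat.le_add_left m k) tendsto_id)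
    exact ((this.sub tendsto_const_nhds).norm)
  have hbar : ‖zbar - s‖ ≤ ‖z k - s‖ :=
    le_of_tendsto hlim' (Filter.Eventually.of_forall hmono)
  have htri : ‖z k - zbar‖ ≤ ‖z k - s‖ + ‖zbar - s‖ := by
    have h1 := norm_sub_le_norm_sub_add_norm_sub (z k) s zbar
    rw [norm_sub_rev s zbar] at h1
    exact h1
  nlinarith [htri, hbar, hds]
end

section
/- Let S ⊂ R^n be nonempty closed and let (z_k) be Fejér monotone with respect to S. Suppose dist(z_k, S) → 0 Q-linearly with ratio ρ ∈ (0,1), i.e., limsup dist(z_{k+1},S)/dist(z_k,S) ≤ ρ. Then (z_k) converges R-linearly to a point z̄ ∈ S with asymptotic rate at most ρ, i.e., limsup ‖z_k − z̄‖^{1/k} ≤ ρ. -/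
open Metric Filter Topology
open scoped RealInnerProductSpace

theorem stmt_7 {n : ℕ} {S : Set (EuclideanSpace ℝ (Fin n))}
    (hSne : S.Nonempty) (hSc : IsClosed S)
    (z : ℕ → EuclideanSpace ℝ (Fin n))
    (hFejer : ∀ s ∈ S, ∀ k : ℕ, ‖z (k+1) - s‖ ≤ ‖z k - s‖)
    (ρ : ℝ) (hρ : ρ ∈ Set.Ioo (0:ℝ) 1)
    (hdist0 : Tendsto (fun k => infDist (z k) S) atTop (𝓝 0))
    (hQ : Filter.limsup (fun k => infDist (z (k+1)) S / infDist (z k) S) atTop ≤ ρ) :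
    ∃ zbar ∈ S, Tendsto z atTop (𝓝 zbar) ∧
      Filter.limsup (fun k : ℕ => ‖z k - zbar‖ ^ ((k : ℝ))⁻¹) atTop ≤ ρ := by
  obtain ⟨hρ0, hρ1⟩ := hρ
  set d : ℕ → ℝ := fun k => infDist (z k) S with hd
  have hd0 : ∀ k, 0 ≤ d k := fun k => infDist_nonneg
  -- the sequence d is antitone, and a step bound
  have hanti : ∀ k, d (k+1) ≤ d k := by
    intro k
    obtain ⟨s, hs, hds⟩ := hSc.exists_infDist_eq_dist hSne (z k)
    calc d (k+1) ≤ dist (z (k+1)) s := infDist_le_dist_of_mem hs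
    _ = ‖z (k+1) - s‖ := dist_eq_norm _ _
    _ ≤ ‖z k - s‖ := hFejer s hs k
    _ = dist (z k) s := (dist_eq_norm _ _).symm
    _ = d k := hds.symm
  have hanti' : Antitone d := antitone_nat_of_succ_le hanti
  have hstep : ∀ k, dist (z k) (z (k+1)) ≤ 2 * d k := by
    intro k
    obtain ⟨s, hs, hds⟩ := hSc.exists_infDist_eq_dist hSne (z k)
    have h1 : dist (z (k+1)) s ≤ d k := by
      have hdk : d k = dist (z k) s := hds
      rw [hdk, dist_eq_norm, dist_eq_norm]
      exact hFejer s hs k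
    calc dist (z k) (z (k+1)) ≤ dist (z k) s + dist s (z (k+1)) := dist_triangle _ _ _
    _ = d k + dist (z (k+1)) s := by rw [← hds, dist_comm s]
    _ ≤ d k + d k := by linarith
    _ = 2 * d k := by ring
  have hratio : ∀ k, d (k+1) / d k ≤ 1 := by
    intro k
    rcases eq_or_lt_of_le (hd0 k) with h | h
    · simp [← h]
    · exact div_le_one_of_le₀ (hanti k) (hd0 k)
  -- geometric bound for each σ ∈ (ρ,1)
  have geom : ∀ σ : ℝ, ρ < σ → σ < 1 →
      ∃ C : ℝ, 0 ≤ C ∧ ∀ k, dist (z k) (z (k+1)) ≤ C * σ ^ k := by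
    intro σ hσρ hσ1
    have hσ0 : 0 < σ := hρ0.trans hσρ
    have hbdd : IsBoundedUnder (· ≤ ·) atTop (fun k => d (k+1) / d k) :=
      ⟨1, eventually_map.2 (Eventually.of_forall hratio)⟩
    have hEv : ∀ᶠ k in atTop, d (k+1) / d k < σ :=
      eventually_lt_of_limsup_lt (lt_of_le_of_lt hQ hσρ) hbdd
    obtain ⟨N, hN⟩ := eventually_atTop.1 hEv
    have hrec : ∀ m : ℕ, d (N + m) ≤ d N * σ ^ m := by
      intro m
      induction m with
      | zero => simp
      | succ m ih =>
        have hk : N ≤ N + m := Nat.le_add_right _ _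
        have hlt := hN (N + m) hk
        have hstep' : d (N + m + 1) ≤ σ * d (N + m) := by
          rcases eq_or_lt_of_le (hd0 (N + m)) with h | h
          · have := hanti (N + m)
            rw [← h] at this ⊢
            simpa using this
          · exact le_of_lt ((div_lt_iff₀ h).1 hlt)
        calc d (N + (m+1)) = d (N + m + 1) := by ring_nf
        _ ≤ σ * d (N + m) := hstep'
        _ ≤ σ * (d N * σ ^ m) := by
            exact mul_le_mul_of_nonneg_left ih hσ0.le
        _ = d N * σ ^ (m+1) := by ring
    have hdk : ∀ k, d k ≤ (d 0 / σ ^ N) * σ ^ k := by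
      intro k
      rcases le_or_gt N k with h | h
      · obtain ⟨m, rfl⟩ := Nat.exists_eq_add_of_le h
        calc d (N + m) ≤ d N * σ ^ m := hrec m
        _ ≤ d 0 * σ ^ m := by
            exact mul_le_mul_of_nonneg_right (hanti' (Nat.zero_le N)) (pow_nonneg hσ0.le m)
        _ = (d 0 / σ ^ N) * σ ^ (N + m) := by
            rw [pow_add]
            field_simp
      · have h1 : σ ^ N ≤ σ ^ k := pow_le_pow_of_le_one hσ0.le hσ1.le h.le
        have h2 : d 0 ≤ (d 0 / σ ^ N) * σ ^ k := by
          rw [div_mul_eq_mul_div, le_div_iff₀ (pow_pos hσ0 N)]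
          exact mul_le_mul_of_nonneg_left h1 (hd0 0)
        exact le_trans (hanti' (Nat.zero_le k)) h2
    refine ⟨2 * (d 0 / σ ^ N), by have := hd0 0; positivity, fun k => ?_⟩
    calc dist (z k) (z (k+1)) ≤ 2 * d k := hstep k
    _ ≤ 2 * ((d 0 / σ ^ N) * σ ^ k) := by
        exact mul_le_mul_of_nonneg_left (hdk k) (by norm_num)
    _ = 2 * (d 0 / σ ^ N) * σ ^ k := by ring
  -- convergence
  set σ₀ : ℝ := (ρ + 1) / 2 with hσ₀
  have hσ₀ρ : ρ < σ₀ := by simp only [hσ₀]; linarith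
  have hσ₀1 : σ₀ < 1 := by simp only [hσ₀]; linarith
  obtain ⟨C₀, hC₀0, hC₀⟩ := geom σ₀ hσ₀ρ hσ₀1
  have hcauchy : CauchySeq z := cauchySeq_of_le_geometric σ₀ C₀ hσ₀1 hC₀
  obtain ⟨zbar, htend⟩ := cauchySeq_tendsto_of_complete hcauchy
  have hzbarS : zbar ∈ S := by
    have h1 : Tendsto (fun k => infDist (z k) S) atTop (𝓝 (infDist zbar S)) :=
      ((continuous_infDist_pt S).tendsto zbar).comp htend
    have h2 : infDist zbar S = 0 := tendsto_nhds_unique h1 hdist0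
    exact (hSc.mem_iff_infDist_zero hSne).2 h2
  refine ⟨zbar, hzbarS, htend, ?_⟩
  -- the limsup bound
  have key : ∀ σ : ℝ, ρ < σ → σ < 1 →
      Filter.limsup (fun k : ℕ => ‖z k - zbar‖ ^ ((k : ℝ))⁻¹) atTop ≤ σ := by
    intro σ hσρ hσ1
    have hσ0 : 0 < σ := hρ0.trans hσρ
    obtain ⟨C, hC0, hC⟩ := geom σ hσρ hσ1
    have hdist : ∀ k, dist (z k) zbar ≤ C * σ ^ k / (1 - σ) :=
      dist_le_of_le_geometric_of_tendsto σ C hσ1 hC htend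
    set K : ℝ := max (C / (1 - σ)) 1 with hK
    have hK1 : 1 ≤ K := le_max_right _ _
    have hK0 : 0 < K := lt_of_lt_of_le one_pos hK1
    have hb : ∀ k, ‖z k - zbar‖ ≤ K * σ ^ k := by
      intro k
      calc ‖z k - zbar‖ = dist (z k) zbar := (dist_eq_norm _ _).symm
      _ ≤ C * σ ^ k / (1 - σ) := hdist k
      _ = (C / (1 - σ)) * σ ^ k := by ring
      _ ≤ K * σ ^ k := by
          exact mul_le_mul_of_nonneg_right (le_max_left _ _) (pow_nonneg hσ0.le k)
    have hfg : ∀ᶠ k in atTop, ‖z k - zbar‖ ^ ((k : ℝ))⁻¹ ≤ K ^ ((k : ℝ))⁻¹ * σ := by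
      filter_upwards [eventually_ge_atTop 1] with k hk
      have hkne : (k : ℝ) ≠ 0 := Nat.cast_ne_zero.2 (Nat.one_le_iff_ne_zero.1 hk)
      have h1 : ‖z k - zbar‖ ^ ((k : ℝ))⁻¹ ≤ (K * σ ^ k) ^ ((k : ℝ))⁻¹ :=
        Real.rpow_le_rpow (norm_nonneg _) (hb k) (by positivity)
      have h2 : (K * σ ^ k) ^ ((k : ℝ))⁻¹ = K ^ ((k : ℝ))⁻¹ * σ := by
        rw [Real.mul_rpow hK0.le (pow_nonneg hσ0.le k), ← Real.rpow_natCast σ k,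
          ← Real.rpow_mul hσ0.le, mul_inv_cancel₀ hkne, Real.rpow_one]
      rw [h2] at h1
      exact h1
    have hgt : Tendsto (fun k : ℕ => K ^ ((k : ℝ))⁻¹ * σ) atTop (𝓝 σ) := by
      have h1 : Tendsto (fun k : ℕ => ((k : ℝ))⁻¹) atTop (𝓝 0) :=
        tendsto_inv_atTop_zero.comp tendsto_natCast_atTop_atTop
      have h2 : Tendsto (fun k : ℕ => K ^ ((k : ℝ))⁻¹) atTop (𝓝 1) := by
        have := (Real.continuousAt_const_rpow (b := (0:ℝ)) hK0.ne').tendsto.comp h1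
        simpa [Real.rpow_zero, Function.comp_def] using this
      simpa using h2.mul_const σ
    calc Filter.limsup (fun k : ℕ => ‖z k - zbar‖ ^ ((k : ℝ))⁻¹) atTop
        ≤ Filter.limsup (fun k : ℕ => K ^ ((k : ℝ))⁻¹ * σ) atTop := by
          refine limsup_le_limsup hfg ?_ ?_
          · exact isCoboundedUnder_le_of_eventually_le atTop
              (x := 0) (Eventually.of_forall fun k => Real.rpow_nonneg (norm_nonneg _) _)
          · exact hgt.isBoundedUnder_le
    _ = σ := hgt.limsup_eq
  by_contra hcon
  push_neg at hcon
  set L := Filter.limsup (fun k : ℕ => ‖z k - zbar‖ ^ ((k : ℝ))⁻¹) atTop with hL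
  have hm : ρ < min L 1 := lt_min hcon hρ1
  have h1 : ρ < (ρ + min L 1) / 2 := by linarith
  have h2 : (ρ + min L 1) / 2 < 1 := by
    have := min_le_right L 1
    linarith
  have h3 := key _ h1 h2
  have h4 : (ρ + min L 1) / 2 < L := by
    have := min_le_left L 1
    linarith
  linarith [h3, h4]
end

section
/- Let X, Y ⊂ R^n be closed convex sets with S := X ∩ Y ≠ ∅, let z be centralized relative to (X,Y), and let c := PCRM(z) denote the circumcenter of {z, R_X(z), R_Y(z)}, which equals the projection of z onto S_X^z ∩ S_Y^z where S_X^z := {w : ⟨w − P_X(z), z − P_X(z)⟩ ≤ 0} and S_Y^z := {w : ⟨w − P_Y(z), z − P_Y(z)⟩ ≤ 0}. Then ‖z − c‖ ≥ max{δ(z), δ(c)}, where δ(w) := max{dist(w,X), dist(w,Y)}. -/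
open Metric Filter Topology
open scoped RealInnerProductSpace

lemma stmt_9_aux {E : Type*} [NormedAddCommGroup E] [InnerProductSpace ℝ E]
    (z c p : E) (h : ⟪c - p, z - p⟫ ≤ 0) :
    ‖z - p‖ ≤ ‖z - c‖ ∧ ‖c - p‖ ≤ ‖z - c‖ := by
  have hd : z - c = (z - p) - (c - p) := by abel
  have h1 : ‖z - c‖ ^ 2 = ‖z - p‖ ^ 2 - 2 * ⟪z - p, c - p⟫ + ‖c - p‖ ^ 2 := by
    rw [hd, @norm_sub_sq_real]
  have h2 : ⟪z - p, c - p⟫ ≤ 0 := by rwa [real_inner_comm]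
  constructor
  · nlinarith [norm_nonneg (z - c), norm_nonneg (z - p), norm_nonneg (c - p)]
  · nlinarith [norm_nonneg (z - c), norm_nonneg (z - p), norm_nonneg (c - p)]

theorem stmt_9 {n : ℕ} {X Y : Set (EuclideanSpace ℝ (Fin n))}
    (hXc : IsClosed X) (hXconv : Convex ℝ X)
    (hYc : IsClosed Y) (hYconv : Convex ℝ Y)
    (hS : (X ∩ Y).Nonempty)
    (PX PY : EuclideanSpace ℝ (Fin n) → EuclideanSpace ℝ (Fin n))
    (hPX : ∀ u, PX u ∈ X ∧ ∀ x ∈ X, ⟪u - PX u, x - PX u⟫ ≤ 0)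
    (hPY : ∀ u, PY u ∈ Y ∧ ∀ x ∈ Y, ⟪u - PY u, x - PY u⟫ ≤ 0)
    (z : EuclideanSpace ℝ (Fin n))
    (hcent : ⟪z - PX z, z - PY z⟫ ≤ 0)
    (c : EuclideanSpace ℝ (Fin n))
    (hcmem : c ∈ {w | ⟪w - PX z, z - PX z⟫ ≤ 0} ∩ {w | ⟪w - PY z, z - PY z⟫ ≤ 0})
    (hcproj : ∀ w ∈ {w | ⟪w - PX z, z - PX z⟫ ≤ 0} ∩ {w | ⟪w - PY z, z - PY z⟫ ≤ 0},
      ⟪z - c, w - c⟫ ≤ 0) :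
    max (max (infDist z X) (infDist z Y)) (max (infDist c X) (infDist c Y)) ≤ ‖z - c‖ := by
  obtain ⟨hX, hY⟩ := hcmem
  have hauxX := stmt_9_aux z c (PX z) hX
  have hauxY := stmt_9_aux z c (PY z) hY
  have hPXm : PX z ∈ X := (hPX z).1
  have hPYm : PY z ∈ Y := (hPY z).1
  have d1 : infDist z X ≤ ‖z - c‖ :=
    le_trans (by simpa [dist_eq_norm] using infDist_le_dist_of_mem hPXm) hauxX.1
  have d2 : infDist z Y ≤ ‖z - c‖ :=
    le_trans (by simpa [dist_eq_norm] using infDist_le_dist_of_mem hPYm) hauxY.1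
  have d3 : infDist c X ≤ ‖z - c‖ :=
    le_trans (by simpa [dist_eq_norm] using infDist_le_dist_of_mem hPXm) hauxX.2
  have d4 : infDist c Y ≤ ‖z - c‖ :=
    le_trans (by simpa [dist_eq_norm] using infDist_le_dist_of_mem hPYm) hauxY.2
  simp [d1, d2, d3, d4]
end

section
/- Let X, Y ⊂ R^n be closed convex sets with S := X ∩ Y ≠ ∅, and let z be centralized. With c := P_{S_X^z ∩ S_Y^z}(z) (equal to PCRM(z)), it holds for every s ∈ S that ‖s − c‖² ≤ ‖s − z‖² − max{δ(z), δ(c)}², where δ(w) := max{dist(w,X), dist(w,Y)}. -/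
open Metric Filter Topology
open scoped RealInnerProductSpace

lemma key_aux {E : Type*} [NormedAddCommGroup E] [InnerProductSpace ℝ E]
    (z a c : E) (h : ⟪c - a, z - a⟫ ≤ 0) :
    ‖z - a‖ ≤ ‖z - c‖ ∧ ‖c - a‖ ≤ ‖z - c‖ := by
  have hzc : z - c = (z - a) - (c - a) := by abel
  have e1 : ‖z - c‖ ^ 2 = ‖z - a‖ ^ 2 - 2 * ⟪z - a, c - a⟫ + ‖c - a‖ ^ 2 := by
    rw [hzc, norm_sub_sq_real]
  have h' : ⟪z - a, c - a⟫ ≤ 0 := by rw [real_inner_comm]; exact h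
  constructor <;>
    nlinarith [norm_nonneg (z - a), norm_nonneg (z - c), norm_nonneg (c - a)]

theorem stmt_10 {n : ℕ} {X Y : Set (EuclideanSpace ℝ (Fin n))}
    (hXc : IsClosed X) (hXconv : Convex ℝ X)
    (hYc : IsClosed Y) (hYconv : Convex ℝ Y)
    (hS : (X ∩ Y).Nonempty)
    (PX PY : EuclideanSpace ℝ (Fin n) → EuclideanSpace ℝ (Fin n))
    (hPX : ∀ u, PX u ∈ X ∧ ∀ x ∈ X, ⟪u - PX u, x - PX u⟫ ≤ 0)
    (hPY : ∀ u, PY u ∈ Y ∧ ∀ x ∈ Y, ⟪u - PY u, x - PY u⟫ ≤ 0)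
    (z : EuclideanSpace ℝ (Fin n))
    (hcent : ⟪z - PX z, z - PY z⟫ ≤ 0)
    (c : EuclideanSpace ℝ (Fin n))
    (hcmem : c ∈ {w | ⟪w - PX z, z - PX z⟫ ≤ 0} ∩ {w | ⟪w - PY z, z - PY z⟫ ≤ 0})
    (hcproj : ∀ w ∈ {w | ⟪w - PX z, z - PX z⟫ ≤ 0} ∩ {w | ⟪w - PY z, z - PY z⟫ ≤ 0},
      ⟪z - c, w - c⟫ ≤ 0) :
    ∀ s ∈ X ∩ Y, ‖s - c‖ ^ 2 ≤ ‖s - z‖ ^ 2 -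
      (max (max (infDist z X) (infDist z Y)) (max (infDist c X) (infDist c Y))) ^ 2 := by
  intro s hs
  obtain ⟨hsX, hsY⟩ := hs
  obtain ⟨hc1, hc2⟩ := hcmem
  have haX := (hPX z).1
  have hbY := (hPY z).1
  -- s is in both halfspaces
  have hsa : ⟪s - PX z, z - PX z⟫ ≤ 0 := by
    rw [real_inner_comm]; exact (hPX z).2 s hsX
  have hsb : ⟪s - PY z, z - PY z⟫ ≤ 0 := by
    rw [real_inner_comm]; exact (hPY z).2 s hsY
  have hproj : ⟪z - c, s - c⟫ ≤ 0 := hcproj s ⟨hsa, hsb⟩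
  -- key inequalities
  have kX := key_aux z (PX z) c hc1
  have kY := key_aux z (PY z) c hc2
  have dzX : infDist z X ≤ ‖z - c‖ :=
    le_trans (by rw [← dist_eq_norm]; exact infDist_le_dist_of_mem haX) kX.1
  have dzY : infDist z Y ≤ ‖z - c‖ :=
    le_trans (by rw [← dist_eq_norm]; exact infDist_le_dist_of_mem hbY) kY.1
  have dcX : infDist c X ≤ ‖z - c‖ :=
    le_trans (by rw [← dist_eq_norm]; exact infDist_le_dist_of_mem haX) kX.2
  have dcY : infDist c Y ≤ ‖z - c‖ :=
    le_trans (by rw [← dist_eq_norm]; exact infDist_le_dist_of_mem hbY) kY.2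
  set M := max (max (infDist z X) (infDist z Y)) (max (infDist c X) (infDist c Y)) with hM
  have hMle : M ≤ ‖z - c‖ := max_le (max_le dzX dzY) (max_le dcX dcY)
  have hMnn : 0 ≤ M := le_trans (infDist_nonneg) (le_trans (le_max_left _ _) (le_max_left _ _))
  have hMsq : M ^ 2 ≤ ‖z - c‖ ^ 2 := by nlinarith
  have hsz : s - z = (s - c) - (z - c) := by abel
  have e2 : ‖s - z‖ ^ 2 = ‖s - c‖ ^ 2 - 2 * ⟪s - c, z - c⟫ + ‖z - c‖ ^ 2 := by
    rw [hsz, norm_sub_sq_real]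
  have h'' : ⟪s - c, z - c⟫ ≤ 0 := by rw [real_inner_comm]; exact hproj
  nlinarith
end

section
/- Let X, Y ⊂ R^n be closed convex sets with S := X ∩ Y ≠ ∅, let T be an admissible operator (Im T ⊂ Y and quasi-nonexpansive w.r.t. S), let (α_k) ⊂ (0,1) be arbitrary, and define the ecCRM iterates z_{k+1} := PCRM(N^{α_k}(z_k)) with N^α := αT + (1−α)P_X T, starting from any z_0 ∈ R^n. Then (z_k) is Fejér monotone with respect to S and converges to a point of S. -/
open Metric Filter Topology
open scoped RealInnerProductSpace

set_option maxHeartbeats 1000000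


section helpers
variable {E : Type*} [NormedAddCommGroup E] [InnerProductSpace ℝ E]

lemma key1 (u p s : E) (h : ⟪u - p, s - p⟫ ≤ 0) :
    ‖p - s‖ ^ 2 ≤ ‖u - s‖ ^ 2 - ‖u - p‖ ^ 2 := by
  have hid : u - s = (u - p) + (p - s) := by abel
  have hexp : ‖u - s‖ ^ 2 = ‖u - p‖ ^ 2 + 2 * ⟪u - p, p - s⟫ + ‖p - s‖ ^ 2 := by
    rw [hid, @norm_add_sq_real]
  have h2 : (⟪u - p, p - s⟫ : ℝ) = - ⟪u - p, s - p⟫ := by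
    rw [show (p - s : E) = -(s - p) by abel, inner_neg_right]
  rw [h2] at hexp
  linarith

lemma key1' (u p s : E) (h : ⟪u - p, s - p⟫ ≤ 0) : ‖p - s‖ ≤ ‖u - s‖ := by
  have := key1 u p s h
  have h2 : ‖p - s‖ ^ 2 ≤ ‖u - s‖ ^ 2 := by nlinarith [sq_nonneg ‖u - p‖]
  exact le_of_pow_le_pow_left₀ two_ne_zero (norm_nonneg _) h2

lemma key2 (w q c : E) (h : ⟪c - q, w - q⟫ ≤ 0) : ‖w - q‖ ^ 2 ≤ ‖w - c‖ ^ 2 := by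
  have hid : w - c = (w - q) - (c - q) := by abel
  have hexp : ‖w - c‖ ^ 2 = ‖w - q‖ ^ 2 - 2 * ⟪w - q, c - q⟫ + ‖c - q‖ ^ 2 := by
    rw [hid, @norm_sub_sq_real]
  have h2 : (⟪w - q, c - q⟫ : ℝ) ≤ 0 := by rwa [real_inner_comm]
  nlinarith [sq_nonneg ‖c - q‖]

lemma tendsto_zero_of_sq {f : ℕ → ℝ} (h0 : ∀ k, 0 ≤ f k)
    (h : Tendsto (fun k => f k ^ 2) atTop (𝓝 0)) : Tendsto f atTop (𝓝 0) := by
  have h1 := (Real.continuous_sqrt.tendsto 0).comp h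
  simp only [Function.comp_def] at h1
  rw [Real.sqrt_zero] at h1
  have heq : (fun k => Real.sqrt (f k ^ 2)) = f := funext fun k => Real.sqrt_sq (h0 k)
  rwa [heq] at h1

lemma centralized (u pu w px py : E) (α : ℝ) (hα0 : 0 ≤ α) (hα1 : α ≤ 1)
    (hw : w = α • u + (1 - α) • pu)
    (h1 : ⟪u - pu, px - pu⟫ ≤ 0)
    (h2 : ⟪w - px, pu - px⟫ ≤ 0)
    (h3 : ⟪w - py, u - py⟫ ≤ 0) :
    ⟪w - px, w - py⟫ ≤ 0 := by
  set d := u - pu with hd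
  set a := w - px with ha
  set b := w - py with hb
  set e := u - py with he
  have hwpu : w - pu = α • d := by rw [hw, hd]; module
  have huw : u - w = (1 - α) • d := by rw [hw, hd]; module
  have e1 : pu - px = a - α • d := by rw [ha, ← hwpu]; abel
  have f1 : ‖a‖ ^ 2 ≤ α * ⟪a, d⟫ := by
    rw [e1, inner_sub_right, real_inner_smul_right, real_inner_self_eq_norm_sq] at h2
    linarith
  have e2 : px - pu = α • d - a := by rw [show px - pu = -(pu - px) by abel, e1]; abel
  have f2 : α * ‖d‖ ^ 2 ≤ ⟪a, d⟫ := by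
    rw [e2, inner_sub_right, real_inner_smul_right, real_inner_self_eq_norm_sq] at h1
    have := real_inner_comm a d
    linarith
  have e3 : e = (1 - α) • d + b := by rw [he, hb, ← huw]; abel
  have hee : (⟪e, e⟫ : ℝ) = (1 - α) * ⟪e, d⟫ + ⟪e, b⟫ := by
    nth_rewrite 2 [e3]
    rw [inner_add_right, real_inner_smul_right]
  have hbe : (⟪e, b⟫ : ℝ) ≤ 0 := by rw [real_inner_comm]; exact h3
  set c := (1 - α) / 2 with hc
  have hc0 : (0:ℝ) ≤ c := by rw [hc]; linarith
  have h2c : 2 * c = 1 - α := by rw [hc]; ring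
  have f3 : ‖e‖ ^ 2 ≤ 2 * c * ⟪e, d⟫ := by
    rw [← real_inner_self_eq_norm_sq, h2c]; linarith
  have hx : ‖e - c • d‖ ^ 2 = ‖e‖ ^ 2 - 2 * c * ⟪e, d⟫ + c ^ 2 * ‖d‖ ^ 2 := by
    rw [← real_inner_self_eq_norm_sq, real_inner_sub_sub_self, real_inner_smul_right,
      real_inner_smul_left, real_inner_smul_right, real_inner_self_eq_norm_sq,
      real_inner_self_eq_norm_sq]
    ring
  have hge : ‖e - c • d‖ ^ 2 ≤ (c * ‖d‖) ^ 2 := by nlinarith [f3, hx]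
  have hgle : ‖e - c • d‖ ≤ c * ‖d‖ :=
    le_of_pow_le_pow_left₀ two_ne_zero (mul_nonneg hc0 (norm_nonneg d)) hge
  have hcs : (⟪a, e - c • d⟫ : ℝ) ≤ ‖a‖ * (c * ‖d‖) :=
    le_trans (real_inner_le_norm a _) (mul_le_mul_of_nonneg_left hgle (norm_nonneg a))
  have f6 : (⟪a, e⟫ : ℝ) ≤ c * ⟪a, d⟫ + ‖a‖ * (c * ‖d‖) := by
    have hsplit : (⟪a, e - c • d⟫ : ℝ) = ⟪a, e⟫ - c * ⟪a, d⟫ := by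
      rw [inner_sub_right, real_inner_smul_right]
    linarith
  have e4 : b = e - (1 - α) • d := by rw [e3]; abel
  have f5 : (⟪a, b⟫ : ℝ) = ⟪a, e⟫ - 2 * c * ⟪a, d⟫ := by
    rw [e4, inner_sub_right, real_inner_smul_right, h2c]
  have hd0 : (0:ℝ) ≤ ⟪a, d⟫ := le_trans (by positivity) f2
  have f4a : (‖a‖ * ‖d‖) ^ 2 ≤ ⟪a, d⟫ ^ 2 := by
    nlinarith [mul_le_mul_of_nonneg_right f1 (sq_nonneg ‖d‖),
      mul_le_mul_of_nonneg_left f2 hd0]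
  have f4 : ‖a‖ * ‖d‖ ≤ ⟪a, d⟫ :=
    le_of_pow_le_pow_left₀ two_ne_zero hd0 f4a
  nlinarith [f5, f6, mul_nonneg hc0 (sub_nonneg.mpr f4)]

end helpers

theorem stmt_12 {n : ℕ} {X Y : Set (EuclideanSpace ℝ (Fin n))}
    (hXc : IsClosed X) (hXconv : Convex ℝ X)
    (hYc : IsClosed Y) (hYconv : Convex ℝ Y)
    (hS : (X ∩ Y).Nonempty)
    (PX PY : EuclideanSpace ℝ (Fin n) → EuclideanSpace ℝ (Fin n))
    (hPX : ∀ u, PX u ∈ X ∧ ∀ x ∈ X, ⟪u - PX u, x - PX u⟫ ≤ 0)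
    (hPY : ∀ u, PY u ∈ Y ∧ ∀ x ∈ Y, ⟪u - PY u, x - PY u⟫ ≤ 0)
    (T : EuclideanSpace ℝ (Fin n) → EuclideanSpace ℝ (Fin n))
    (hTY : ∀ u, T u ∈ Y)
    (hTqne : ∀ u, ∀ s ∈ X ∩ Y, ‖T u - s‖ ≤ ‖u - s‖)
    (C : EuclideanSpace ℝ (Fin n) → EuclideanSpace ℝ (Fin n))
    -- for centralized points, C is the projection onto the intersection of the
    -- two supporting half-spaces (this characterizes PCRM at such points)
    (hC : ∀ w : EuclideanSpace ℝ (Fin n), ⟪w - PX w, w - PY w⟫ ≤ 0 →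
      C w ∈ {v | ⟪v - PX w, w - PX w⟫ ≤ 0} ∩ {v | ⟪v - PY w, w - PY w⟫ ≤ 0} ∧
      ∀ v ∈ {v | ⟪v - PX w, w - PX w⟫ ≤ 0} ∩ {v | ⟪v - PY w, w - PY w⟫ ≤ 0},
        ⟪w - C w, v - C w⟫ ≤ 0)
    (α : ℕ → ℝ) (hα : ∀ k, α k ∈ Set.Ioo (0:ℝ) 1)
    (z : ℕ → EuclideanSpace ℝ (Fin n))
    (hz : ∀ k, z (k+1) = C (α k • T (z k) + (1 - α k) • PX (T (z k)))) :
    (∀ s ∈ X ∩ Y, ∀ k : ℕ, ‖z (k+1) - s‖ ≤ ‖z k - s‖) ∧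
      ∃ p ∈ X ∩ Y, Tendsto z atTop (𝓝 p) := by
  set w : ℕ → EuclideanSpace ℝ (Fin n) :=
    fun k => α k • T (z k) + (1 - α k) • PX (T (z k)) with hwdef
  have hwk : ∀ k, w k = α k • T (z k) + (1 - α k) • PX (T (z k)) := fun k => rfl
  -- centralization
  have hcent : ∀ k, (⟪w k - PX (w k), w k - PY (w k)⟫ : ℝ) ≤ 0 := by
    intro k
    exact centralized (T (z k)) (PX (T (z k))) (w k) (PX (w k)) (PY (w k)) (α k)
      (le_of_lt (hα k).1) (le_of_lt (hα k).2) (hwk k)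
      ((hPX (T (z k))).2 (PX (w k)) (hPX (w k)).1)
      ((hPX (w k)).2 (PX (T (z k))) (hPX (T (z k))).1)
      ((hPY (w k)).2 (T (z k)) (hTY (z k)))
  have hCk := fun k => hC (w k) (hcent k)
  -- membership of S in the half-spaces
  have hmemX : ∀ s ∈ X ∩ Y, ∀ k, (⟪s - PX (w k), w k - PX (w k)⟫ : ℝ) ≤ 0 := by
    intro s hs k
    rw [real_inner_comm]
    exact (hPX (w k)).2 s hs.1
  have hmemY : ∀ s ∈ X ∩ Y, ∀ k, (⟪s - PY (w k), w k - PY (w k)⟫ : ℝ) ≤ 0 := by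
    intro s hs k
    rw [real_inner_comm]
    exact (hPY (w k)).2 s hs.2
  -- w k is no farther from s than z k
  have hwz : ∀ s ∈ X ∩ Y, ∀ k, ‖w k - s‖ ≤ ‖z k - s‖ := by
    intro s hs k
    have h1 : ‖PX (T (z k)) - s‖ ≤ ‖T (z k) - s‖ :=
      key1' (T (z k)) (PX (T (z k))) s ((hPX (T (z k))).2 s hs.1)
    have h2 : ‖T (z k) - s‖ ≤ ‖z k - s‖ := hTqne (z k) s hs
    have hvec : w k - s = α k • (T (z k) - s) + (1 - α k) • (PX (T (z k)) - s) := by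
      rw [hwk k]; module
    have h3 : ‖w k - s‖ ≤ α k * ‖T (z k) - s‖ + (1 - α k) * ‖PX (T (z k)) - s‖ := by
      rw [hvec]
      refine le_trans (norm_add_le _ _) ?_
      rw [norm_smul, norm_smul, Real.norm_eq_abs, Real.norm_eq_abs,
        abs_of_pos (hα k).1, abs_of_pos (by linarith [(hα k).2] : (0:ℝ) < 1 - α k)]
    have h4 := mul_le_mul_of_nonneg_left h2 (le_of_lt (hα k).1)
    have h5 := mul_le_mul_of_nonneg_left (h1.trans h2)
      (by linarith [(hα k).2] : (0:ℝ) ≤ 1 - α k)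
    nlinarith [h3, h4, h5]
  -- main Fejér square inequality
  have fejer_sq : ∀ s ∈ X ∩ Y, ∀ k,
      ‖z (k+1) - s‖ ^ 2 ≤ ‖z k - s‖ ^ 2 - ‖w k - z (k+1)‖ ^ 2 := by
    intro s hs k
    have hproj : (⟪w k - z (k+1), s - z (k+1)⟫ : ℝ) ≤ 0 := by
      rw [hz k]
      exact (hCk k).2 s ⟨hmemX s hs k, hmemY s hs k⟩
    have h1 := key1 (w k) (z (k+1)) s hproj
    have h2 : ‖w k - s‖ ^ 2 ≤ ‖z k - s‖ ^ 2 :=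
      pow_le_pow_left₀ (norm_nonneg _) (hwz s hs k) 2
    linarith
  have fejer : ∀ s ∈ X ∩ Y, ∀ k, ‖z (k+1) - s‖ ≤ ‖z k - s‖ := by
    intro s hs k
    have := fejer_sq s hs k
    have h2 : ‖z (k+1) - s‖ ^ 2 ≤ ‖z k - s‖ ^ 2 := by nlinarith [sq_nonneg ‖w k - z (k+1)‖]
    exact le_of_pow_le_pow_left₀ two_ne_zero (norm_nonneg _) h2
  refine ⟨fejer, ?_⟩
  -- convergence
  obtain ⟨s₀, hs₀⟩ := hS
  set f : ℕ → ℝ := fun k => ‖z k - s₀‖ with hf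
  have hanti : Antitone f := antitone_nat_of_succ_le (fun k => fejer s₀ hs₀ k)
  have hbdd : BddBelow (Set.range f) := ⟨0, by rintro x ⟨k, rfl⟩; exact norm_nonneg _⟩
  have hLt : Tendsto f atTop (𝓝 (⨅ k, f k)) := tendsto_atTop_ciInf hanti hbdd
  have hsq : Tendsto (fun k => f k ^ 2) atTop (𝓝 ((⨅ k, f k) ^ 2)) := hLt.pow 2
  have hsq' : Tendsto (fun k => f (k + 1) ^ 2) atTop (𝓝 ((⨅ k, f k) ^ 2)) :=
    hsq.comp (tendsto_add_atTop_nat 1)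
  have hdiff : Tendsto (fun k => f k ^ 2 - f (k + 1) ^ 2) atTop (𝓝 0) := by
    simpa using hsq.sub hsq'
  have hwzn : Tendsto (fun k => ‖w k - z (k + 1)‖) atTop (𝓝 0) := by
    refine tendsto_zero_of_sq (fun k => norm_nonneg _) ?_
    refine squeeze_zero (fun k => sq_nonneg _) (fun k => ?_) hdiff
    have := fejer_sq s₀ hs₀ k
    simp only [hf]
    linarith
  have hwzsq : Tendsto (fun k => ‖w k - z (k + 1)‖ ^ 2) atTop (𝓝 0) := by
    simpa using hwzn.pow 2
  have hXsmall : Tendsto (fun k => ‖w k - PX (w k)‖) atTop (𝓝 0) := by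
    refine tendsto_zero_of_sq (fun k => norm_nonneg _) ?_
    refine squeeze_zero (fun k => sq_nonneg _) (fun k => ?_) hwzsq
    have h := key2 (w k) (PX (w k)) (C (w k)) (hCk k).1.1
    rw [← hz k] at h
    exact h
  have hYsmall : Tendsto (fun k => ‖w k - PY (w k)‖) atTop (𝓝 0) := by
    refine tendsto_zero_of_sq (fun k => norm_nonneg _) ?_
    refine squeeze_zero (fun k => sq_nonneg _) (fun k => ?_) hwzsq
    have h := key2 (w k) (PY (w k)) (C (w k)) (hCk k).1.2
    rw [← hz k] at h
    exact h
  -- distances of the iterates to X and Y tend to 0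
  have hinfX : Tendsto (fun k => infDist (z k) X) atTop (𝓝 0) := by
    rw [← tendsto_add_atTop_iff_nat 1]
    refine squeeze_zero (fun k => infDist_nonneg) (fun k => ?_) (by simpa using hwzn.add hXsmall)
    calc infDist (z (k + 1)) X ≤ dist (z (k + 1)) (PX (w k)) :=
          infDist_le_dist_of_mem (hPX (w k)).1
      _ ≤ dist (z (k + 1)) (w k) + dist (w k) (PX (w k)) := dist_triangle _ _ _
      _ = ‖w k - z (k + 1)‖ + ‖w k - PX (w k)‖ := by
          rw [dist_eq_norm, dist_eq_norm, norm_sub_rev (z (k+1))]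
  have hinfY : Tendsto (fun k => infDist (z k) Y) atTop (𝓝 0) := by
    rw [← tendsto_add_atTop_iff_nat 1]
    refine squeeze_zero (fun k => infDist_nonneg) (fun k => ?_) (by simpa using hwzn.add hYsmall)
    calc infDist (z (k + 1)) Y ≤ dist (z (k + 1)) (PY (w k)) :=
          infDist_le_dist_of_mem (hPY (w k)).1
      _ ≤ dist (z (k + 1)) (w k) + dist (w k) (PY (w k)) := dist_triangle _ _ _
      _ = ‖w k - z (k + 1)‖ + ‖w k - PY (w k)‖ := by
          rw [dist_eq_norm, dist_eq_norm, norm_sub_rev (z (k+1))]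
  -- a convergent subsequence
  have hball : ∀ k, z k ∈ closedBall s₀ (f 0) := by
    intro k
    rw [mem_closedBall, dist_eq_norm]
    exact hanti (Nat.zero_le k)
  obtain ⟨p, hp, φ, hφ, hzφ⟩ := (isCompact_closedBall s₀ (f 0)).tendsto_subseq hball
  have hpX : p ∈ X := by
    have h1 : Tendsto (fun k => infDist (z (φ k)) X) atTop (𝓝 0) :=
      hinfX.comp hφ.tendsto_atTop
    have h2 : Tendsto (fun k => infDist (z (φ k)) X) atTop (𝓝 (infDist p X)) :=
      ((continuous_infDist_pt X).tendsto p).comp hzφ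
    have h0 : infDist p X = 0 := tendsto_nhds_unique h2 h1
    rw [← hXc.closure_eq]
    exact (mem_closure_iff_infDist_zero ⟨s₀, hs₀.1⟩).2 h0
  have hpY : p ∈ Y := by
    have h1 : Tendsto (fun k => infDist (z (φ k)) Y) atTop (𝓝 0) :=
      hinfY.comp hφ.tendsto_atTop
    have h2 : Tendsto (fun k => infDist (z (φ k)) Y) atTop (𝓝 (infDist p Y)) :=
      ((continuous_infDist_pt Y).tendsto p).comp hzφ
    have h0 : infDist p Y = 0 := tendsto_nhds_unique h2 h1
    rw [← hYc.closure_eq]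
    exact (mem_closure_iff_infDist_zero ⟨s₀, hs₀.2⟩).2 h0
  -- full convergence to p
  refine ⟨p, ⟨hpX, hpY⟩, ?_⟩
  set g : ℕ → ℝ := fun k => ‖z k - p‖ with hg
  have hganti : Antitone g := antitone_nat_of_succ_le (fun k => fejer p ⟨hpX, hpY⟩ k)
  have hgbdd : BddBelow (Set.range g) := ⟨0, by rintro x ⟨k, rfl⟩; exact norm_nonneg _⟩
  have hgL : Tendsto g atTop (𝓝 (⨅ k, g k)) := tendsto_atTop_ciInf hganti hgbdd
  have hgsub : Tendsto (fun k => g (φ k)) atTop (𝓝 0) := by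
    have := (tendsto_iff_norm_sub_tendsto_zero).1 hzφ
    simpa [hg, Function.comp] using this
  have hgsub' : Tendsto (fun k => g (φ k)) atTop (𝓝 (⨅ k, g k)) :=
    hgL.comp hφ.tendsto_atTop
  have h0 : (⨅ k, g k) = 0 := tendsto_nhds_unique hgsub' hgsub
  rw [h0] at hgL
  exact (tendsto_iff_norm_sub_tendsto_zero).2 hgL
end

section
/- Under the hypotheses of the ecCRM iteration (admissible T, α_k ∈ (0,1), z_{k+1} = PCRM(N^{α_k} z_k)), for every s ∈ S and every k: ‖s − z_{k+1}‖² ≤ ‖s − z_k‖² − δ(z_{k+1})², where δ(w) := max{dist(w,X), dist(w,Y)}. Consequently, Σ_{k≥1} δ(z_k)² ≤ dist(z_0, S)² < ∞ and δ(z_k) → 0. -/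
set_option maxHeartbeats 1000000

open Metric Filter Topology
open scoped RealInnerProductSpace

private lemma aux_norm_le_of_sq_le {a b : ℝ} (ha : 0 ≤ a) (hb : 0 ≤ b)
    (h : a ^ 2 ≤ b ^ 2) : a ≤ b := by nlinarith

/-- Uniqueness of the point satisfying the projection variational inequality. -/
private lemma aux_proj_unique {E : Type*} [NormedAddCommGroup E] [InnerProductSpace ℝ E]
    {X : Set E} {w p q : E} (hp : p ∈ X) (hq : q ∈ X)
    (hpc : ∀ x ∈ X, ⟪w - p, x - p⟫ ≤ 0) (hqc : ∀ x ∈ X, ⟪w - q, x - q⟫ ≤ 0) :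
    p = q := by
  have h1 : ⟪w - p, q - p⟫ ≤ 0 := hpc q hq
  have h2 : ⟪w - q, p - q⟫ ≤ 0 := hqc p hp
  have key : ⟪q - p, q - p⟫ ≤ 0 := by
    have e : q - p = (w - p) - (w - q) := by abel
    have : ⟪q - p, q - p⟫ = ⟪w - p, q - p⟫ - ⟪w - q, q - p⟫ := by
      rw [e, inner_sub_left]
    have h2' : ⟪w - q, q - p⟫ = -⟪w - q, p - q⟫ := by
      rw [← inner_neg_right]; congr 1; abel
    linarith [h1, h2, this.le, this.ge]
  have : q - p = 0 := real_inner_self_nonpos.mp key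
  have := sub_eq_zero.mp this
  exact this.symm

theorem stmt_13 {n : ℕ} {X Y : Set (EuclideanSpace ℝ (Fin n))}
    (hXc : IsClosed X) (hXconv : Convex ℝ X)
    (hYc : IsClosed Y) (hYconv : Convex ℝ Y)
    (hS : (X ∩ Y).Nonempty)
    (PX PY : EuclideanSpace ℝ (Fin n) → EuclideanSpace ℝ (Fin n))
    (hPX : ∀ u, PX u ∈ X ∧ ∀ x ∈ X, ⟪u - PX u, x - PX u⟫ ≤ 0)
    (hPY : ∀ u, PY u ∈ Y ∧ ∀ x ∈ Y, ⟪u - PY u, x - PY u⟫ ≤ 0)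
    (T : EuclideanSpace ℝ (Fin n) → EuclideanSpace ℝ (Fin n))
    (hTY : ∀ u, T u ∈ Y)
    (hTqne : ∀ u, ∀ s ∈ X ∩ Y, ‖T u - s‖ ≤ ‖u - s‖)
    (C : EuclideanSpace ℝ (Fin n) → EuclideanSpace ℝ (Fin n))
    (hC : ∀ w : EuclideanSpace ℝ (Fin n), ⟪w - PX w, w - PY w⟫ ≤ 0 →
      C w ∈ {v | ⟪v - PX w, w - PX w⟫ ≤ 0} ∩ {v | ⟪v - PY w, w - PY w⟫ ≤ 0} ∧
      ∀ v ∈ {v | ⟪v - PX w, w - PX w⟫ ≤ 0} ∩ {v | ⟪v - PY w, w - PY w⟫ ≤ 0},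
        ⟪w - C w, v - C w⟫ ≤ 0)
    (α : ℕ → ℝ) (hα : ∀ k, α k ∈ Set.Ioo (0:ℝ) 1)
    (z : ℕ → EuclideanSpace ℝ (Fin n))
    (hz : ∀ k, z (k+1) = C (α k • T (z k) + (1 - α k) • PX (T (z k)))) :
    (∀ s ∈ X ∩ Y, ∀ k : ℕ,
      ‖s - z (k+1)‖ ^ 2 ≤ ‖s - z k‖ ^ 2 - (max (infDist (z (k+1)) X) (infDist (z (k+1)) Y)) ^ 2) ∧
    (∑' k : ℕ, (max (infDist (z (k+1)) X) (infDist (z (k+1)) Y)) ^ 2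
        ≤ (infDist (z 0) (X ∩ Y)) ^ 2) ∧
    Tendsto (fun k => max (infDist (z k) X) (infDist (z k) Y)) atTop (𝓝 0) := by
  set δ : ℕ → ℝ := fun k => max (infDist (z k) X) (infDist (z k) Y) with hδ
  have hδnn : ∀ k, 0 ≤ δ k := fun k => le_trans infDist_nonneg (le_max_left _ _)
  -- Main per-step inequality
  have key : ∀ s ∈ X ∩ Y, ∀ k : ℕ,
      ‖s - z (k+1)‖ ^ 2 ≤ ‖s - z k‖ ^ 2 - δ (k+1) ^ 2 := by
    intro s hs k
    obtain ⟨ha0, ha1⟩ := hα k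
    set a := α k with ha
    set u := T (z k) with hu
    set p := PX u with hp
    set w := a • u + (1 - a) • p with hw
    have hwp : w - p = a • (u - p) := by rw [hw]; module
    have huw : u - w = (1 - a) • (u - p) := by rw [hw]; module
    -- PX w = p
    have hPXw : PX w = p := by
      refine aux_proj_unique (hPX w).1 (hPX u).1 (hPX w).2 ?_
      intro x hx
      have : ⟪w - p, x - p⟫ = a * ⟪u - p, x - p⟫ := by rw [hwp, real_inner_smul_left]
      rw [this]
      exact mul_nonpos_of_nonneg_of_nonpos ha0.le ((hPX u).2 x hx)
    -- w is centralized
    have hcent : ⟪w - PX w, w - PY w⟫ ≤ 0 := by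
      set q := PY w with hq
      have h1 : ⟪w - q, u - q⟫ ≤ 0 := (hPY w).2 u (hTY (z k))
      have e : u - q = (u - w) + (w - q) := by abel
      have h2 : ⟪w - q, u - w⟫ + ⟪w - q, w - q⟫ ≤ 0 := by
        rw [← inner_add_right, ← e]; exact h1
      have h3 : ⟪w - q, u - w⟫ = (1 - a) * ⟪u - p, w - q⟫ := by
        rw [huw, real_inner_smul_right, real_inner_comm]
      have h4 : ⟪u - p, w - q⟫ ≤ 0 := by
        have hnn : (0:ℝ) ≤ ⟪w - q, w - q⟫ := real_inner_self_nonneg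
        nlinarith [h2, h3.le, h3.ge]
      have h5 : ⟪w - PX w, w - q⟫ = a * ⟪u - p, w - q⟫ := by
        rw [hPXw, hwp, real_inner_smul_left]
      rw [h5]
      exact mul_nonpos_of_nonneg_of_nonpos ha0.le h4
    obtain ⟨⟨hzX, hzY⟩, hopt⟩ := hC w hcent
    have hz' : z (k+1) = C w := hz k
    set z' := z (k+1) with hz'd
    rw [← hz'] at hzX hzY hopt
    -- s belongs to both half-spaces
    have hsX : ⟪s - PX w, w - PX w⟫ ≤ 0 := by
      rw [real_inner_comm]; exact (hPX w).2 s hs.1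
    have hsY : ⟪s - PY w, w - PY w⟫ ≤ 0 := by
      rw [real_inner_comm]; exact (hPY w).2 s hs.2
    have hso : ⟪w - z', s - z'⟫ ≤ 0 := hopt s ⟨hsX, hsY⟩
    -- ‖s - z'‖² + ‖w - z'‖² ≤ ‖s - w‖²
    have hA : ‖s - z'‖ ^ 2 + ‖w - z'‖ ^ 2 ≤ ‖s - w‖ ^ 2 := by
      have e : s - w = (s - z') - (w - z') := by abel
      have := norm_sub_sq_real (s - z') (w - z')
      rw [← e] at this
      have hcom : ⟪s - z', w - z'⟫ = ⟪w - z', s - z'⟫ := real_inner_comm _ _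
      nlinarith [hso]
    -- distance bounds : generic half-space argument
    have hdist : ∀ r : EuclideanSpace ℝ (Fin n), ⟪z' - r, w - r⟫ ≤ 0 →
        ‖z' - r‖ ≤ ‖w - z'‖ := by
      intro r hr
      have e : z' - r = (z' - w) + (w - r) := by abel
      have h1 := norm_add_sq_real (z' - w) (w - r)
      rw [← e] at h1
      have h2 : ⟪z' - r, w - r⟫ = ⟪z' - w, w - r⟫ + ⟪w - r, w - r⟫ := by
        rw [← inner_add_left, ← e]
      have h3 : (0:ℝ) ≤ ⟪w - r, w - r⟫ := real_inner_self_nonneg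
      have hself : ⟪w - r, w - r⟫ = ‖w - r‖ ^ 2 := real_inner_self_eq_norm_sq _
      have hsq : ‖z' - r‖ ^ 2 ≤ ‖z' - w‖ ^ 2 := by nlinarith
      have := aux_norm_le_of_sq_le (norm_nonneg _) (norm_nonneg _) hsq
      rwa [norm_sub_rev z' w] at this
    have hdX : infDist z' X ≤ ‖w - z'‖ :=
      le_trans (le_trans (infDist_le_dist_of_mem (hPX w).1) (by rw [dist_eq_norm]))
        (hdist (PX w) hzX)
    have hdY : infDist z' Y ≤ ‖w - z'‖ :=
      le_trans (le_trans (infDist_le_dist_of_mem (hPY w).1) (by rw [dist_eq_norm]))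
        (hdist (PY w) hzY)
    have hδle : δ (k+1) ≤ ‖w - z'‖ := max_le hdX hdY
    have hδsq : δ (k+1) ^ 2 ≤ ‖w - z'‖ ^ 2 := pow_le_pow_left₀ (hδnn _) hδle 2
    -- ‖s - w‖ ≤ ‖s - z k‖
    have hsp : ‖s - p‖ ≤ ‖s - u‖ := by
      have h1 : ⟪u - p, s - p⟫ ≤ 0 := (hPX u).2 s hs.1
      have e : s - u = (s - p) - (u - p) := by abel
      have h2 := norm_sub_sq_real (s - p) (u - p)
      rw [← e] at h2
      have hcom : ⟪s - p, u - p⟫ = ⟪u - p, s - p⟫ := real_inner_comm _ _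
      refine aux_norm_le_of_sq_le (norm_nonneg _) (norm_nonneg _) ?_
      nlinarith
    have hsu : ‖s - u‖ ≤ ‖s - z k‖ := by
      rw [norm_sub_rev s u, norm_sub_rev s (z k)]
      exact hTqne (z k) s hs
    have hsw : ‖s - w‖ ≤ ‖s - z k‖ := by
      have e : s - w = a • (s - u) + (1 - a) • (s - p) := by rw [hw]; module
      calc ‖s - w‖ ≤ ‖a • (s - u)‖ + ‖(1 - a) • (s - p)‖ := by rw [e]; exact norm_add_le _ _
        _ = a * ‖s - u‖ + (1 - a) * ‖s - p‖ := by
            rw [norm_smul, norm_smul, Real.norm_eq_abs, Real.norm_eq_abs,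
              abs_of_pos ha0, abs_of_pos (by linarith)]
        _ ≤ ‖s - z k‖ := by nlinarith [norm_nonneg (s - u), norm_nonneg (s - p)]
    have hsw2 : ‖s - w‖ ^ 2 ≤ ‖s - z k‖ ^ 2 :=
      pow_le_pow_left₀ (norm_nonneg _) hsw 2
    linarith
  refine ⟨fun s hs k => key s hs k, ?_⟩
  -- choose closest point in X ∩ Y to z 0
  obtain ⟨s₀, hs₀, hs₀d⟩ := (hXc.inter hYc).exists_infDist_eq_dist hS (z 0)
  have hd0 : ‖s₀ - z 0‖ = infDist (z 0) (X ∩ Y) := by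
    rw [hs₀d, dist_eq_norm, norm_sub_rev]
  have hsum : ∀ N : ℕ, ∑ i ∈ Finset.range N, δ (i+1) ^ 2 ≤ (infDist (z 0) (X ∩ Y)) ^ 2 := by
    intro N
    have h : ∑ i ∈ Finset.range N, δ (i+1) ^ 2 + ‖s₀ - z N‖ ^ 2 ≤ ‖s₀ - z 0‖ ^ 2 := by
      induction N with
      | zero => simp
      | succ m ih =>
        rw [Finset.sum_range_succ]
        have := key s₀ hs₀ m
        linarith
    rw [← hd0]
    nlinarith [norm_nonneg (s₀ - z N), h]
  have hnn : ∀ k : ℕ, 0 ≤ δ (k+1) ^ 2 := fun k => sq_nonneg _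
  have hsummable : Summable (fun k : ℕ => δ (k+1) ^ 2) := summable_of_sum_range_le hnn hsum
  refine ⟨Summable.tsum_le_of_sum_range_le hsummable hsum, ?_⟩
  have h1 : Tendsto (fun k : ℕ => δ (k+1) ^ 2) atTop (𝓝 0) := hsummable.tendsto_atTop_zero
  have h2 : Tendsto (fun k : ℕ => δ k ^ 2) atTop (𝓝 0) :=
    (tendsto_add_atTop_iff_nat 1).mp h1
  have h3 : Tendsto (fun k : ℕ => Real.sqrt (δ k ^ 2)) atTop (𝓝 (Real.sqrt 0)) :=
    (Real.continuous_sqrt.tendsto 0).comp h2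
  rw [Real.sqrt_zero] at h3
  exact h3.congr fun k => Real.sqrt_sq (hδnn k)
end

section
/- Let X, Y ⊂ R^n be closed convex with S := X ∩ Y ≠ ∅, and suppose the local error bound holds on a set V: ω·dist(z,S) ≤ max{dist(z,X), dist(z,Y)} for all z ∈ V, with ω ∈ (0,1). Set β := √(1−ω²). Then for any centralized z ∈ V, dist(PCRM(z), S) ≤ β·dist(z, S). -/
open Metric Filter Topology
open scoped RealInnerProductSpace

lemma aux_halfspace {n : ℕ} (z c p : EuclideanSpace ℝ (Fin n))
    (h : ⟪c - p, z - p⟫ ≤ 0) : ‖z - p‖ ≤ ‖z - c‖ := by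
  have h1 : ⟪z - c, z - p⟫ = ‖z - p‖ ^ 2 - ⟪c - p, z - p⟫ := by
    rw [show z - c = (z - p) - (c - p) by abel, inner_sub_left,
      real_inner_self_eq_norm_sq]
  have h2 := real_inner_le_norm (z - c) (z - p)
  nlinarith [norm_nonneg (z - p), norm_nonneg (z - c)]

theorem stmt_14 {n : ℕ} {X Y : Set (EuclideanSpace ℝ (Fin n))}
    (hXc : IsClosed X) (hXconv : Convex ℝ X)
    (hYc : IsClosed Y) (hYconv : Convex ℝ Y)
    (hS : (X ∩ Y).Nonempty)
    (PX PY : EuclideanSpace ℝ (Fin n) → EuclideanSpace ℝ (Fin n))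
    (hPX : ∀ u, PX u ∈ X ∧ ∀ x ∈ X, ⟪u - PX u, x - PX u⟫ ≤ 0)
    (hPY : ∀ u, PY u ∈ Y ∧ ∀ x ∈ Y, ⟪u - PY u, x - PY u⟫ ≤ 0)
    (V : Set (EuclideanSpace ℝ (Fin n))) (ω : ℝ) (hω : ω ∈ Set.Ioo (0:ℝ) 1)
    (hEB : ∀ v ∈ V, ω * infDist v (X ∩ Y) ≤ max (infDist v X) (infDist v Y))
    (z : EuclideanSpace ℝ (Fin n)) (hzV : z ∈ V)
    (hcent : ⟪z - PX z, z - PY z⟫ ≤ 0)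
    (c : EuclideanSpace ℝ (Fin n))
    (hcmem : c ∈ {w | ⟪w - PX z, z - PX z⟫ ≤ 0} ∩ {w | ⟪w - PY z, z - PY z⟫ ≤ 0})
    (hcproj : ∀ w ∈ {w | ⟪w - PX z, z - PX z⟫ ≤ 0} ∩ {w | ⟪w - PY z, z - PY z⟫ ≤ 0},
      ⟪z - c, w - c⟫ ≤ 0) :
    infDist c (X ∩ Y) ≤ Real.sqrt (1 - ω ^ 2) * infDist z (X ∩ Y) := by
  obtain ⟨s, hsS, hsd⟩ := (hXc.inter hYc).exists_infDist_eq_dist hS z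
  set d := infDist z (X ∩ Y) with hd
  have hd0 : 0 ≤ d := infDist_nonneg
  -- s is in both halfspaces
  have hsX : ⟪s - PX z, z - PX z⟫ ≤ 0 := by
    rw [real_inner_comm]; exact (hPX z).2 s hsS.1
  have hsY : ⟪s - PY z, z - PY z⟫ ≤ 0 := by
    rw [real_inner_comm]; exact (hPY z).2 s hsS.2
  have hcs : ⟪z - c, s - c⟫ ≤ 0 := hcproj s ⟨hsX, hsY⟩
  -- ‖z - c‖ dominates dist to X and Y
  have hX1 : infDist z X ≤ ‖z - c‖ := by
    calc infDist z X ≤ dist z (PX z) := infDist_le_dist_of_mem (hPX z).1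
      _ = ‖z - PX z‖ := dist_eq_norm _ _
      _ ≤ ‖z - c‖ := aux_halfspace z c (PX z) hcmem.1
  have hY1 : infDist z Y ≤ ‖z - c‖ := by
    calc infDist z Y ≤ dist z (PY z) := infDist_le_dist_of_mem (hPY z).1
      _ = ‖z - PY z‖ := dist_eq_norm _ _
      _ ≤ ‖z - c‖ := aux_halfspace z c (PY z) hcmem.2
  have hωd : ω * d ≤ ‖z - c‖ := (hEB z hzV).trans (max_le hX1 hY1)
  -- Pythagorean-type decrease
  have hsz : ‖s - z‖ = d := by
    rw [hsd, dist_eq_norm, norm_sub_rev]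
  have hexp : ‖s - z‖ ^ 2 = ‖s - c‖ ^ 2 - 2 * ⟪s - c, z - c⟫ + ‖z - c‖ ^ 2 := by
    rw [show s - z = (s - c) - (z - c) by abel]
    rw [norm_sub_sq_real]
  have hcs' : ⟪s - c, z - c⟫ ≤ 0 := by rwa [real_inner_comm]
  have hω2 : (0:ℝ) ≤ 1 - ω ^ 2 := by nlinarith [hω.1, hω.2]
  have hωd0 : 0 ≤ ω * d := mul_nonneg (le_of_lt hω.1) hd0
  have key : ‖s - c‖ ^ 2 ≤ (1 - ω ^ 2) * d ^ 2 := by nlinarith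
  calc infDist c (X ∩ Y) ≤ dist c s := infDist_le_dist_of_mem hsS
    _ = ‖s - c‖ := by rw [dist_eq_norm, norm_sub_rev]
    _ ≤ Real.sqrt (1 - ω ^ 2) * d := by
        have h := Real.sqrt_le_sqrt key
        rwa [Real.sqrt_sq (norm_nonneg _), Real.sqrt_mul hω2,
          Real.sqrt_sq hd0] at h
end

section
/- Let X, Y ⊂ R^n be closed convex with S := X ∩ Y ≠ ∅, and suppose the error bound ω·dist(z,S) ≤ max{dist(z,X), dist(z,Y)} holds for all z ∈ V with ω ∈ (0,1); set β := √(1−ω²). Let T be admissible, α ∈ (0,1), N^α := αT + (1−α)P_X T, and C^α := PCRM ∘ N^α. Then for every z ∈ V (such that the relevant points remain in V): dist(C^α z, S) ≤ β(α + (1−α)β)·dist(Tz, S). -/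
open Metric Filter Topology
open scoped RealInnerProductSpace

section Aux

variable {E : Type*} [NormedAddCommGroup E] [InnerProductSpace ℝ E]

/-- lower bound for infDist -/
lemma aux_le_infDist {S : Set E} (hS : S.Nonempty) {x : E} {c : ℝ}
    (h : ∀ s ∈ S, c ≤ dist x s) : c ≤ infDist x S := by
  by_contra hlt
  push_neg at hlt
  obtain ⟨y, hy, hdy⟩ := (infDist_lt_iff hS).mp hlt
  exact absurd (h y hy) (not_le.mpr hdy)

/-- obtuse angle gives Pythagorean inequality -/
lemma aux_pyth {w c s : E} (h : ⟪w - c, s - c⟫ ≤ 0) :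
    ‖c - s‖ ^ 2 + ‖w - c‖ ^ 2 ≤ ‖w - s‖ ^ 2 := by
  have hexp : ‖(w - c) + (c - s)‖ ^ 2
      = ‖w - c‖ ^ 2 + 2 * ⟪w - c, c - s⟫ + ‖c - s‖ ^ 2 := norm_add_sq_real _ _
  have h2 : ⟪w - c, c - s⟫ = - ⟪w - c, s - c⟫ := by
    rw [← inner_neg_right]; congr 1; abel
  have h3 : (w - c) + (c - s) = w - s := by abel
  rw [h3] at hexp
  rw [hexp, h2]
  nlinarith

/-- uniqueness of projections -/
lemma aux_proj_unique_s15 {u p q : E} (h1 : ⟪u - p, q - p⟫ ≤ 0) (h2 : ⟪u - q, p - q⟫ ≤ 0) :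
    p = q := by
  have e1 : ⟪u - q, p - q⟫ = ⟪q - u, q - p⟫ := by
    rw [← inner_neg_neg]; congr 1 <;> abel
  have hsum : ⟪u - p, q - p⟫ + ⟪q - u, q - p⟫ = ⟪q - p, q - p⟫ := by
    rw [← inner_add_left]; congr 1; abel
  have hq : ‖q - p‖ ^ 2 ≤ 0 := by
    rw [← real_inner_self_eq_norm_sq]
    rw [e1] at h2
    linarith
  have hn : ‖q - p‖ = 0 := by nlinarith [norm_nonneg (q - p)]
  have : q - p = 0 := norm_eq_zero.mp hn
  have : q = p := by rwa [sub_eq_zero] at this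
  exact this.symm

/-- core linear-advance estimate -/
lemma aux_advance {S : Set E} (hS : S.Nonempty) {w c : E} {ω : ℝ}
    (hω0 : 0 < ω) (hω1 : ω < 1)
    (hlow : ω * infDist w S ≤ ‖w - c‖)
    (hobt : ∀ s ∈ S, ⟪w - c, s - c⟫ ≤ 0) :
    infDist c S ≤ Real.sqrt (1 - ω ^ 2) * infDist w S := by
  set D := infDist w S with hD
  set d := infDist c S with hd
  have hDnn : 0 ≤ D := infDist_nonneg
  have hdnn : 0 ≤ d := infDist_nonneg
  have hωD : 0 ≤ ω * D := by positivity
  have key : Real.sqrt (d ^ 2 + ω ^ 2 * D ^ 2) ≤ D := by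
    apply aux_le_infDist hS
    intro s hs
    have h1 : ‖c - s‖ ^ 2 + ‖w - c‖ ^ 2 ≤ ‖w - s‖ ^ 2 := aux_pyth (hobt s hs)
    have h2 : d ≤ ‖c - s‖ := by
      have := infDist_le_dist_of_mem (x := c) hs
      rwa [dist_eq_norm] at this
    have h3 : (ω * D) ^ 2 ≤ ‖w - c‖ ^ 2 := by
      have := norm_nonneg (w - c)
      nlinarith
    have h4 : d ^ 2 + ω ^ 2 * D ^ 2 ≤ ‖w - s‖ ^ 2 := by nlinarith
    rw [dist_eq_norm]
    calc Real.sqrt (d ^ 2 + ω ^ 2 * D ^ 2) ≤ Real.sqrt (‖w - s‖ ^ 2) :=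
          Real.sqrt_le_sqrt h4
      _ = ‖w - s‖ := Real.sqrt_sq (norm_nonneg _)
  have hsq : d ^ 2 + ω ^ 2 * D ^ 2 ≤ D ^ 2 := by
    have h0 : (0:ℝ) ≤ d ^ 2 + ω ^ 2 * D ^ 2 := by positivity
    have := Real.sq_sqrt h0
    nlinarith [Real.sqrt_nonneg (d ^ 2 + ω ^ 2 * D ^ 2)]
  have hd2 : d ^ 2 ≤ (1 - ω ^ 2) * D ^ 2 := by nlinarith
  calc d = Real.sqrt (d ^ 2) := (Real.sqrt_sq hdnn).symm
    _ ≤ Real.sqrt ((1 - ω ^ 2) * D ^ 2) := Real.sqrt_le_sqrt hd2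
    _ = Real.sqrt (1 - ω ^ 2) * D := by
        rw [Real.sqrt_mul (by nlinarith), Real.sqrt_sq hDnn]

/-- convexity of the distance function -/
lemma aux_convex_infDist {S : Set E} (hS : S.Nonempty) (hconv : Convex ℝ S)
    {y x : E} {α : ℝ} (hα0 : 0 < α) (hα1 : α < 1) :
    infDist (α • y + (1 - α) • x) S ≤ α * infDist y S + (1 - α) * infDist x S := by
  set w := α • y + (1 - α) • x with hw
  have key : ∀ s ∈ S, ∀ t ∈ S,
      infDist w S ≤ α * dist y s + (1 - α) * dist x t := by
    intro s hs t ht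
    have hmem : α • s + (1 - α) • t ∈ S :=
      hconv hs ht (le_of_lt hα0) (by linarith) (by ring)
    have h1 : infDist w S ≤ dist w (α • s + (1 - α) • t) :=
      infDist_le_dist_of_mem hmem
    have h2 : dist w (α • s + (1 - α) • t) ≤ α * dist y s + (1 - α) * dist x t := by
      have hdec : w - (α • s + (1 - α) • t) = α • (y - s) + (1 - α) • (x - t) := by
        rw [hw]; module
      rw [dist_eq_norm, hdec, dist_eq_norm, dist_eq_norm]
      calc ‖α • (y - s) + (1 - α) • (x - t)‖
          ≤ ‖α • (y - s)‖ + ‖(1 - α) • (x - t)‖ := norm_add_le _ _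
        _ = α * ‖y - s‖ + (1 - α) * ‖x - t‖ := by
            rw [norm_smul, norm_smul, Real.norm_eq_abs, Real.norm_eq_abs,
              abs_of_pos hα0, abs_of_pos (by linarith : (0:ℝ) < 1 - α)]
    linarith
  -- first take inf over s
  have step1 : ∀ t ∈ S,
      infDist w S ≤ α * infDist y S + (1 - α) * dist x t := by
    intro t ht
    have h : (infDist w S - (1 - α) * dist x t) / α ≤ infDist y S := by
      apply aux_le_infDist hS
      intro s hs
      rw [div_le_iff₀ hα0]
      have := key s hs t ht
      linarith [mul_comm (dist y s) α]
    rw [div_le_iff₀ hα0] at h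
    linarith [mul_comm (infDist y S) α]
  have step2 : (infDist w S - α * infDist y S) / (1 - α) ≤ infDist x S := by
    apply aux_le_infDist hS
    intro t ht
    rw [div_le_iff₀ (by linarith : (0:ℝ) < 1 - α)]
    have := step1 t ht
    linarith [mul_comm (dist x t) (1 - α)]
  rw [div_le_iff₀ (by linarith : (0:ℝ) < 1 - α)] at step2
  linarith [mul_comm (infDist x S) (1 - α)]

end Aux

set_option maxHeartbeats 1000000 in
theorem stmt_15 {n : ℕ} {X Y : Set (EuclideanSpace ℝ (Fin n))}
    (hXc : IsClosed X) (hXconv : Convex ℝ X)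
    (hYc : IsClosed Y) (hYconv : Convex ℝ Y)
    (hS : (X ∩ Y).Nonempty)
    (PX PY : EuclideanSpace ℝ (Fin n) → EuclideanSpace ℝ (Fin n))
    (hPX : ∀ u, PX u ∈ X ∧ ∀ x ∈ X, ⟪u - PX u, x - PX u⟫ ≤ 0)
    (hPY : ∀ u, PY u ∈ Y ∧ ∀ x ∈ Y, ⟪u - PY u, x - PY u⟫ ≤ 0)
    (V : Set (EuclideanSpace ℝ (Fin n))) (ω : ℝ) (hω : ω ∈ Set.Ioo (0:ℝ) 1)
    (hEB : ∀ v ∈ V, ω * infDist v (X ∩ Y) ≤ max (infDist v X) (infDist v Y))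
    (T : EuclideanSpace ℝ (Fin n) → EuclideanSpace ℝ (Fin n))
    (hTY : ∀ u, T u ∈ Y)
    (hTqne : ∀ u, ∀ s ∈ X ∩ Y, ‖T u - s‖ ≤ ‖u - s‖)
    (C : EuclideanSpace ℝ (Fin n) → EuclideanSpace ℝ (Fin n))
    (hC : ∀ w : EuclideanSpace ℝ (Fin n), ⟪w - PX w, w - PY w⟫ ≤ 0 →
      C w ∈ {v | ⟪v - PX w, w - PX w⟫ ≤ 0} ∩ {v | ⟪v - PY w, w - PY w⟫ ≤ 0} ∧
      ∀ v ∈ {v | ⟪v - PX w, w - PX w⟫ ≤ 0} ∩ {v | ⟪v - PY w, w - PY w⟫ ≤ 0},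
        ⟪w - C w, v - C w⟫ ≤ 0)
    (α : ℝ) (hα : α ∈ Set.Ioo (0:ℝ) 1)
    (z : EuclideanSpace ℝ (Fin n)) (hzV : z ∈ V)
    -- the relevant points remain in V
    (hTzV : T z ∈ V) (hNzV : α • T z + (1 - α) • PX (T z) ∈ V) :
    infDist (C (α • T z + (1 - α) • PX (T z))) (X ∩ Y) ≤
      Real.sqrt (1 - ω ^ 2) * (α + (1 - α) * Real.sqrt (1 - ω ^ 2)) *
        infDist (T z) (X ∩ Y) := by
  obtain ⟨hω0, hω1⟩ := hω
  obtain ⟨hα0, hα1⟩ := hα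
  set S : Set (EuclideanSpace ℝ (Fin n)) := X ∩ Y with hSdef
  set y : EuclideanSpace ℝ (Fin n) := T z with hy
  set x : EuclideanSpace ℝ (Fin n) := PX y with hx
  set w : EuclideanSpace ℝ (Fin n) := α • y + (1 - α) • x with hw
  set β : ℝ := Real.sqrt (1 - ω ^ 2) with hβ
  have hβnn : 0 ≤ β := Real.sqrt_nonneg _
  have hβle : β ≤ 1 := by
    rw [hβ]
    calc Real.sqrt (1 - ω ^ 2) ≤ Real.sqrt 1 := Real.sqrt_le_sqrt (by nlinarith)
      _ = 1 := Real.sqrt_one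
  -- w - x = α • (y - x)
  have hwx : w - x = α • (y - x) := by rw [hw]; module
  have hyw : y - w = (1 - α) • (y - x) := by rw [hw]; module
  -- Step 0: PX w = x
  have hPXw : PX w = x := by
    apply aux_proj_unique_s15 (u := w)
    · exact (hPX w).2 x (hPX y).1
    · rw [hwx, real_inner_smul_left]
      have : ⟪y - x, PX w - x⟫ ≤ 0 := (hPX y).2 (PX w) (hPX w).1
      nlinarith
  -- Step 1: w is centralized
  have hcen : ⟪w - PX w, w - PY w⟫ ≤ 0 := by
    rw [hPXw, hwx, real_inner_smul_left]
    have hkey : (1 - α) * ⟪y - x, w - PY w⟫ ≤ 0 := by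
      rw [← real_inner_smul_left, ← hyw]
      have h1 : ⟪w - PY w, y - PY w⟫ ≤ 0 := (hPY w).2 y (hTY z)
      have hsplit : ⟪y - w, w - PY w⟫
          = ⟪y - PY w, w - PY w⟫ - ⟪w - PY w, w - PY w⟫ := by
        rw [← inner_sub_left]; congr 1; abel
      rw [real_inner_comm] at h1
      have h2 : (0:ℝ) ≤ ⟪w - PY w, w - PY w⟫ := real_inner_self_nonneg
      rw [hsplit]
      linarith
    have h3 : ⟪y - x, w - PY w⟫ ≤ 0 := by nlinarith
    nlinarith
  obtain ⟨⟨hCX, hCY⟩, hCvar⟩ := hC w hcen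
  simp only [Set.mem_setOf_eq] at hCX hCY
  -- S is inside both halfspaces
  have hSsub : ∀ s ∈ S, ⟪w - C w, s - C w⟫ ≤ 0 := by
    intro s hs
    apply hCvar
    constructor
    · show ⟪s - PX w, w - PX w⟫ ≤ 0
      rw [real_inner_comm]
      exact (hPX w).2 s hs.1
    · show ⟪s - PY w, w - PY w⟫ ≤ 0
      rw [real_inner_comm]
      exact (hPY w).2 s hs.2
  -- ‖w - C w‖ dominates both residuals
  have hXres : ‖w - PX w‖ ≤ ‖w - C w‖ := by
    have h := aux_pyth (w := w) (c := PX w) (s := C w) ?_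
    · have := sq_nonneg ‖PX w - C w‖
      nlinarith [norm_nonneg (w - PX w), norm_nonneg (w - C w)]
    · rw [real_inner_comm]; exact hCX
  have hYres : ‖w - PY w‖ ≤ ‖w - C w‖ := by
    have h := aux_pyth (w := w) (c := PY w) (s := C w) ?_
    · have := sq_nonneg ‖PY w - C w‖
      nlinarith [norm_nonneg (w - PY w), norm_nonneg (w - C w)]
    · rw [real_inner_comm]; exact hCY
  have hdX : infDist w X ≤ ‖w - PX w‖ := by
    have := infDist_le_dist_of_mem (x := w) (hPX w).1
    rwa [dist_eq_norm] at this
  have hdY : infDist w Y ≤ ‖w - PY w‖ := by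
    have := infDist_le_dist_of_mem (x := w) (hPY w).1
    rwa [dist_eq_norm] at this
  -- linear advance at w
  have hadv : infDist (C w) S ≤ β * infDist w S := by
    apply aux_advance ⟨hS.choose, hS.choose_spec⟩ hω0 hω1 _ hSsub
    calc ω * infDist w S ≤ max (infDist w X) (infDist w Y) := hEB w hNzV
      _ ≤ ‖w - C w‖ := max_le (le_trans hdX hXres) (le_trans hdY hYres)
  -- advance of PX at y = T z
  have hadvX : infDist x S ≤ β * infDist y S := by
    apply aux_advance (w := y) (c := x) ⟨hS.choose, hS.choose_spec⟩ hω0 hω1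
    · have hY0 : infDist y Y = 0 := infDist_zero_of_mem (hTY z)
      have hdX' : infDist y X ≤ ‖y - x‖ := by
        have := infDist_le_dist_of_mem (x := y) (hPX y).1
        rwa [dist_eq_norm] at this
      calc ω * infDist y S ≤ max (infDist y X) (infDist y Y) := hEB y hTzV
        _ = infDist y X := by rw [hY0, max_eq_left infDist_nonneg]
        _ ≤ ‖y - x‖ := hdX'
    · intro s hs
      exact (hPX y).2 s hs.1
  -- convexity step
  have hconvS : Convex ℝ S := hXconv.inter hYconv
  have hNdist : infDist w S ≤ α * infDist y S + (1 - α) * infDist x S :=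
    aux_convex_infDist ⟨hS.choose, hS.choose_spec⟩ hconvS hα0 hα1
  -- combine
  have hfin : infDist (C w) S ≤ β * (α + (1 - α) * β) * infDist y S := by
    have h1 : infDist w S ≤ (α + (1 - α) * β) * infDist y S := by
      calc infDist w S ≤ α * infDist y S + (1 - α) * infDist x S := hNdist
        _ ≤ α * infDist y S + (1 - α) * (β * infDist y S) := by
            have h2 := mul_le_mul_of_nonneg_left hadvX (by linarith : (0:ℝ) ≤ 1 - α)
            linarith
        _ = (α + (1 - α) * β) * infDist y S := by ring
    calc infDist (C w) S ≤ β * infDist w S := hadv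
      _ ≤ β * ((α + (1 - α) * β) * infDist y S) := by
          apply mul_le_mul_of_nonneg_left h1 hβnn
      _ = β * (α + (1 - α) * β) * infDist y S := by ring
  exact hfin
end

section
/- In the setting of the previous statement (error bound with constant ω, β := √(1−ω²), admissible T, α ∈ (0,1)), if moreover N^α(z) is centralized but not strictly centralized (hence N^α(z) ∈ Y and C^α z = P_X(Tz)), then dist(C^α z, S) ≤ (αβ / (1 − (1−α)β))·dist(Tz, S). -/
open Metric Filter Topology
open scoped RealInnerProductSpace

lemma stmt16_aux {n : ℕ} (N p r : EuclideanSpace ℝ (Fin n)) :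
    ⟪N - r, p - r⟫ + ⟪N - p, r - p⟫ = ‖p - r‖ ^ 2 := by
  have e1 : ⟪N - p, r - p⟫ = -⟪N - p, p - r⟫ := by
    rw [← inner_neg_right]; congr 1; abel
  have e2 : ⟪N - r, p - r⟫ - ⟪N - p, p - r⟫ = ⟪p - r, p - r⟫ := by
    rw [← inner_sub_left]; congr 1; abel
  have e3 : ⟪p - r, p - r⟫ = ‖p - r‖ ^ 2 := real_inner_self_eq_norm_sq _
  linarith

set_option maxHeartbeats 1000000 in
theorem stmt_16 {n : ℕ} {X Y : Set (EuclideanSpace ℝ (Fin n))}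
    (hXc : IsClosed X) (hXconv : Convex ℝ X)
    (hYc : IsClosed Y) (hYconv : Convex ℝ Y)
    (hS : (X ∩ Y).Nonempty)
    (PX PY : EuclideanSpace ℝ (Fin n) → EuclideanSpace ℝ (Fin n))
    (hPX : ∀ u, PX u ∈ X ∧ ∀ x ∈ X, ⟪u - PX u, x - PX u⟫ ≤ 0)
    (hPY : ∀ u, PY u ∈ Y ∧ ∀ x ∈ Y, ⟪u - PY u, x - PY u⟫ ≤ 0)
    (V : Set (EuclideanSpace ℝ (Fin n))) (ω : ℝ) (hω : ω ∈ Set.Ioo (0:ℝ) 1)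
    (hEB : ∀ v ∈ V, ω * infDist v (X ∩ Y) ≤ max (infDist v X) (infDist v Y))
    (T : EuclideanSpace ℝ (Fin n) → EuclideanSpace ℝ (Fin n))
    (hTY : ∀ u, T u ∈ Y)
    (hTqne : ∀ u, ∀ s ∈ X ∩ Y, ‖T u - s‖ ≤ ‖u - s‖)
    (C : EuclideanSpace ℝ (Fin n) → EuclideanSpace ℝ (Fin n))
    (hC : ∀ w : EuclideanSpace ℝ (Fin n), ⟪w - PX w, w - PY w⟫ ≤ 0 →
      C w ∈ {v | ⟪v - PX w, w - PX w⟫ ≤ 0} ∩ {v | ⟪v - PY w, w - PY w⟫ ≤ 0} ∧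
      ∀ v ∈ {v | ⟪v - PX w, w - PX w⟫ ≤ 0} ∩ {v | ⟪v - PY w, w - PY w⟫ ≤ 0},
        ⟪w - C w, v - C w⟫ ≤ 0)
    (α : ℝ) (hα : α ∈ Set.Ioo (0:ℝ) 1)
    (z : EuclideanSpace ℝ (Fin n)) (hzV : z ∈ V)
    (hTzV : T z ∈ V) (hNzV : α • T z + (1 - α) • PX (T z) ∈ V)
    -- N^α z is centralized but not strictly centralized
    (heq : ⟪(α • T z + (1 - α) • PX (T z)) - PX (α • T z + (1 - α) • PX (T z)),
            (α • T z + (1 - α) • PX (T z)) - PY (α • T z + (1 - α) • PX (T z))⟫ = 0) :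
    infDist (C (α • T z + (1 - α) • PX (T z))) (X ∩ Y) ≤
      (α * Real.sqrt (1 - ω ^ 2) / (1 - (1 - α) * Real.sqrt (1 - ω ^ 2))) *
        infDist (T z) (X ∩ Y) := by
  obtain ⟨hω0, hω1⟩ := hω
  obtain ⟨hα0, hα1⟩ := hα
  set w : EuclideanSpace ℝ (Fin n) := T z with hw
  set p : EuclideanSpace ℝ (Fin n) := PX w with hp
  set N : EuclideanSpace ℝ (Fin n) := α • w + (1 - α) • p with hN
  set β : ℝ := Real.sqrt (1 - ω ^ 2) with hβ
  have hβ0 : 0 ≤ β := Real.sqrt_nonneg _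
  have hβ1 : β < 1 := by
    have h1 : Real.sqrt (1 - ω ^ 2) < Real.sqrt 1 :=
      Real.sqrt_lt_sqrt (by nlinarith) (by nlinarith)
    rw [hβ]; simpa using h1
  have hNp : N - p = α • (w - p) := by rw [hN]; module
  have hNw : N - w = -((1 - α) • (w - p)) := by rw [hN]; module
  -- Step 1: PX N = p
  have hPXN : PX N = p := by
    have h1 : ⟪N - PX N, p - PX N⟫ ≤ 0 := (hPX N).2 p (hPX w).1
    have h2 : ⟪N - p, PX N - p⟫ ≤ 0 := by
      have h3 : ⟪w - p, PX N - p⟫ ≤ 0 := (hPX w).2 (PX N) (hPX N).1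
      rw [hNp, real_inner_smul_left]
      nlinarith
    have hid := stmt16_aux N p (PX N)
    have hnn : ‖p - PX N‖ = 0 := by nlinarith [norm_nonneg (p - PX N)]
    have := norm_sub_eq_zero_iff.mp hnn
    exact this.symm
  -- Step 2: N ∈ Y (indeed N = PY N)
  set q : EuclideanSpace ℝ (Fin n) := PY N with hq
  have hqmem := hPY N
  have hinner0 : ⟪N - q, w - p⟫ = 0 := by
    rw [hPXN, hNp, real_inner_smul_left] at heq
    have : ⟪w - p, N - q⟫ = 0 := by
      rcases mul_eq_zero.mp heq with h | h
      · exact absurd h (by positivity)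
      · exact h
    rw [real_inner_comm]; exact this
  have hNq : N = q := by
    have h1 : ⟪N - q, w - q⟫ ≤ 0 := hqmem.2 w (hTY z)
    have h2 : ⟪N - q, N - w⟫ = 0 := by
      rw [hNw, inner_neg_right, real_inner_smul_right, hinner0]
      ring
    have h3 : ⟪N - q, N - q⟫ = ⟪N - q, N - w⟫ + ⟪N - q, w - q⟫ := by
      rw [← inner_add_right]; congr 1; abel
    have h4 : ‖N - q‖ ^ 2 ≤ 0 := by
      rw [← real_inner_self_eq_norm_sq]; linarith [h3, h2, h1]
    have hnn : ‖N - q‖ = 0 := by nlinarith [norm_nonneg (N - q)]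
    exact norm_sub_eq_zero_iff.mp hnn
  have hNY : N ∈ Y := hNq ▸ hqmem.1
  -- Step 3: C N = p
  have hCN : C N = p := by
    obtain ⟨⟨hc1, hc2⟩, hcmin⟩ := hC N (le_of_eq heq)
    simp only [Set.mem_setOf_eq, hPXN] at hc1 hc2
    have mem1 : p ∈ {v | ⟪v - PX N, N - PX N⟫ ≤ 0} := by
      simp only [Set.mem_setOf_eq, hPXN, sub_self, inner_zero_left, le_refl]
    have mem2 : p ∈ {v | ⟪v - PY N, N - PY N⟫ ≤ 0} := by
      simp only [Set.mem_setOf_eq, ← hq, ← hNq, sub_self, inner_zero_right, le_refl]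
    have hmin : ⟪N - C N, p - C N⟫ ≤ 0 := hcmin p ⟨mem1, mem2⟩
    have hc1' : ⟪N - p, C N - p⟫ ≤ 0 := by rw [real_inner_comm]; exact hc1
    have hid := stmt16_aux N p (C N)
    have hnn : ‖p - C N‖ = 0 := by nlinarith [norm_nonneg (p - C N)]
    exact (norm_sub_eq_zero_iff.mp hnn).symm
  -- Step 4: contraction  infDist p S ≤ β * infDist N S
  have hScl : IsClosed (X ∩ Y) := hXc.inter hYc
  have dKey : infDist p (X ∩ Y) ≤ β * infDist N (X ∩ Y) := by
    obtain ⟨s, hsS, hes⟩ := hScl.exists_infDist_eq_dist hS N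
    have hgeo : ‖p - s‖ ^ 2 + ‖N - p‖ ^ 2 ≤ ‖N - s‖ ^ 2 := by
      have h := (hPX N).2 s hsS.1
      rw [hPXN] at h
      have expand := norm_add_sq_real (N - p) (p - s)
      rw [show (N - p) + (p - s) = N - s from by abel] at expand
      have hcomm : ⟪N - p, p - s⟫ = -⟪N - p, s - p⟫ := by
        rw [← inner_neg_right]; congr 1; abel
      nlinarith
    have hEBN := hEB N hNzV
    have hNY0 : infDist N Y = 0 := infDist_zero_of_mem hNY
    have hNX : infDist N X ≤ ‖N - p‖ := by
      rw [← dist_eq_norm]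
      have := infDist_le_dist_of_mem (x := N) (hPX N).1
      rwa [hPXN] at this
    have hmax : ω * infDist N (X ∩ Y) ≤ ‖N - p‖ := by
      rw [hNY0] at hEBN
      exact le_trans hEBN (max_le hNX (norm_nonneg _))
    have h1 : infDist p (X ∩ Y) ≤ ‖p - s‖ := by
      rw [← dist_eq_norm]; exact infDist_le_dist_of_mem hsS
    have h2 : ‖N - s‖ = infDist N (X ∩ Y) := by rw [hes, dist_eq_norm]
    have hsq : infDist p (X ∩ Y) ^ 2 ≤ (1 - ω ^ 2) * infDist N (X ∩ Y) ^ 2 := by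
      rw [h2] at hgeo
      have hDa : infDist p (X ∩ Y) ^ 2 ≤ ‖p - s‖ ^ 2 :=
        pow_le_pow_left₀ infDist_nonneg h1 2
      have hb : (ω * infDist N (X ∩ Y)) ^ 2 ≤ ‖N - p‖ ^ 2 :=
        pow_le_pow_left₀ (mul_nonneg hω0.le infDist_nonneg) hmax 2
      nlinarith [hDa, hb, hgeo]
    have hsqrt := Real.sqrt_le_sqrt hsq
    rwa [Real.sqrt_sq (infDist_nonneg), Real.sqrt_mul (by nlinarith),
      Real.sqrt_sq (infDist_nonneg), ← hβ] at hsqrt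
  -- Step 5: infDist N S ≤ α * infDist w S + (1-α) * infDist p S
  have dN : infDist N (X ∩ Y) ≤ α * infDist w (X ∩ Y) + (1 - α) * infDist p (X ∩ Y) := by
    obtain ⟨s1, hs1, e1⟩ := hScl.exists_infDist_eq_dist hS w
    obtain ⟨s2, hs2, e2⟩ := hScl.exists_infDist_eq_dist hS p
    have hs3 : α • s1 + (1 - α) • s2 ∈ X ∩ Y :=
      ⟨hXconv hs1.1 hs2.1 hα0.le (by linarith) (by ring),
       hYconv hs1.2 hs2.2 hα0.le (by linarith) (by ring)⟩
    have hle : infDist N (X ∩ Y) ≤ dist N (α • s1 + (1 - α) • s2) :=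
      infDist_le_dist_of_mem hs3
    have hnorm : dist N (α • s1 + (1 - α) • s2) ≤ α * dist w s1 + (1 - α) * dist p s2 := by
      simp only [dist_eq_norm]
      rw [show N - (α • s1 + (1 - α) • s2) = α • (w - s1) + (1 - α) • (p - s2) from by
        rw [hN]; module]
      calc ‖α • (w - s1) + (1 - α) • (p - s2)‖
          ≤ ‖α • (w - s1)‖ + ‖(1 - α) • (p - s2)‖ := norm_add_le _ _
        _ = α * ‖w - s1‖ + (1 - α) * ‖p - s2‖ := by
            rw [norm_smul, norm_smul, Real.norm_eq_abs, Real.norm_eq_abs,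
              abs_of_nonneg hα0.le, abs_of_nonneg (by linarith)]
    rw [e1, e2]
    linarith
  -- Conclusion
  rw [hCN]
  have hden : 0 < 1 - (1 - α) * β := by nlinarith
  rw [div_mul_eq_mul_div, le_div_iff₀ hden]
  nlinarith [mul_le_mul_of_nonneg_left dN hβ0, dKey,
    infDist_nonneg (x := w) (s := X ∩ Y), infDist_nonneg (x := p) (s := X ∩ Y)]
end

section
/- Let M ⊂ R^n be a C¹ embedded manifold of dimension n−1 and z̄ ∈ M. Let (q_k) ⊂ M and (z_k) ⊂ R^n satisfy q_k → z̄, z_k → z̄, z_k ∈ T_M(q_k) (the affine tangent hyperplane to M at q_k), and z_k ≠ q_k for all k. Then dist(z_k, M)/‖z_k − q_k‖ → 0 as k → ∞. -/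
open Metric Filter Topology
open scoped RealInnerProductSpace

/-- a C¹ embedded manifold of codimension 1 is formalized as the
zero level set of a C¹ function with nonvanishing derivative on it; the affine
tangent hyperplane at q is \`{v | fderiv ℝ g q (v - q) = 0}\`. -/
theorem stmt_18 {n : ℕ} (g : EuclideanSpace ℝ (Fin n) → ℝ)
    (hg : ContDiff ℝ 1 g)
    (M : Set (EuclideanSpace ℝ (Fin n))) (hM : M = {x | g x = 0})
    (hgrad : ∀ x ∈ M, fderiv ℝ g x ≠ 0)
    (zbar : EuclideanSpace ℝ (Fin n)) (hzbar : zbar ∈ M)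
    (q z : ℕ → EuclideanSpace ℝ (Fin n))
    (hqM : ∀ k, q k ∈ M)
    (hq : Tendsto q atTop (𝓝 zbar)) (hz : Tendsto z atTop (𝓝 zbar))
    (htan : ∀ k, fderiv ℝ g (q k) (z k - q k) = 0)
    (hne : ∀ k, z k ≠ q k) :
    Tendsto (fun k => infDist (z k) M / ‖z k - q k‖) atTop (𝓝 0) := by
  have hgd : Differentiable ℝ g := hg.differentiable one_ne_zero
  have hgc : Continuous (fderiv ℝ g) := hg.continuous_fderiv one_ne_zero
  set L := fderiv ℝ g zbar with hLdef
  have hL0 : L ≠ 0 := hgrad zbar hzbar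
  obtain ⟨w, hw⟩ : ∃ w, L w ≠ 0 := by
    by_contra h
    push_neg at h
    exact hL0 (ContinuousLinearMap.ext fun w => by simpa using h w)
  set v : EuclideanSpace ℝ (Fin n) := (L w)⁻¹ • w with hvdef
  have hLv : L v = 1 := by
    simp [hvdef, map_smul, inv_mul_cancel₀ hw]
  have hvpos : 0 < ‖v‖ := by
    rcases eq_or_ne v 0 with h | h
    · rw [h] at hLv; simp at hLv
    · exact norm_pos_iff.mpr h
  have hgz : ∀ x ∈ M, g x = 0 := by intro x hx; rw [hM] at hx; exact hx
  rw [Metric.tendsto_nhds]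
  intro ε hε
  set θ : ℝ := ε / (2 * ‖v‖ + 1) with hθdef
  have hθpos : 0 < θ := div_pos hε (by positivity)
  set ρ : ℝ := min (θ / 2) (1 / (4 * ‖v‖)) with hρdef
  have hρpos : 0 < ρ := lt_min (by positivity) (by positivity)
  have hev : ∀ᶠ x in 𝓝 zbar, ‖fderiv ℝ g x - L‖ < ρ := by
    have h1 := (hgc.tendsto zbar).eventually (Metric.ball_mem_nhds L hρpos)
    exact h1.mono fun x hx => by simpa [dist_eq_norm] using hx
  obtain ⟨r, hrpos, hball⟩ := Metric.eventually_nhds_iff_ball.mp hev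
  -- eventual conditions on k
  have hq' : ∀ᶠ k in atTop, q k ∈ ball zbar (r / 2) :=
    hq.eventually (Metric.ball_mem_nhds zbar (by positivity))
  have hz' : ∀ᶠ k in atTop, z k ∈ ball zbar (r / 2) :=
    hz.eventually (Metric.ball_mem_nhds zbar (by positivity))
  have hgz' : ∀ᶠ k in atTop, 2 * ‖g (z k)‖ * ‖v‖ < r / 2 := by
    have hgcont : Tendsto (fun k => 2 * ‖g (z k)‖ * ‖v‖) atTop (𝓝 (2 * ‖g zbar‖ * ‖v‖)) := by
      exact (((hg.continuous.tendsto zbar).comp hz).norm.const_mul 2).mul_const ‖v‖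
    rw [hgz zbar hzbar] at hgcont
    simp only [norm_zero, mul_zero, zero_mul] at hgcont
    exact hgcont.eventually_lt_const (by positivity)
  filter_upwards [hq', hz', hgz'] with k hqk hzk hgk
  set a : ℝ := g (z k) with hadef
  have hd : (0:ℝ) < ‖z k - q k‖ := by
    rw [norm_pos_iff]
    exact sub_ne_zero_of_ne (hne k)
  have hqkr : q k ∈ ball zbar r := by
    refine Metric.ball_subset_ball (by linarith) hqk
  have hzkr : z k ∈ ball zbar r := Metric.ball_subset_ball (by linarith) hzk
  -- Step A : ‖a‖ ≤ θ * ‖z k - q k‖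
  have stepA : ‖a‖ ≤ θ * ‖z k - q k‖ := by
    set h : EuclideanSpace ℝ (Fin n) → ℝ := fun x => g x - fderiv ℝ g (q k) x with hhdef
    have hdiff : ∀ x ∈ ball zbar r, DifferentiableAt ℝ h x := fun x _ =>
      (hgd x).sub ((fderiv ℝ g (q k)).differentiableAt)
    have hbound : ∀ x ∈ ball zbar r, ‖fderiv ℝ h x‖ ≤ θ := by
      intro x hx
      have hfd : fderiv ℝ h x = fderiv ℝ g x - fderiv ℝ g (q k) := by
        rw [hhdef]
        rw [fderiv_fun_sub (hgd x) ((fderiv ℝ g (q k)).differentiableAt),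
          (fderiv ℝ g (q k)).fderiv]
      rw [hfd]
      have h1 : ‖fderiv ℝ g x - L‖ < ρ := hball x hx
      have h2 : ‖fderiv ℝ g (q k) - L‖ < ρ := hball _ hqkr
      have h3 : fderiv ℝ g x - fderiv ℝ g (q k) =
          (fderiv ℝ g x - L) - (fderiv ℝ g (q k) - L) := by abel
      rw [h3]
      calc ‖(fderiv ℝ g x - L) - (fderiv ℝ g (q k) - L)‖
          ≤ ‖fderiv ℝ g x - L‖ + ‖fderiv ℝ g (q k) - L‖ := norm_sub_le _ _
        _ ≤ ρ + ρ := by linarith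
        _ ≤ θ := by
            have := min_le_left (θ / 2) (1 / (4 * ‖v‖))
            rw [hρdef]; linarith [min_le_left (θ / 2) (1 / (4 * ‖v‖))]
    have key := (convex_ball zbar r).norm_image_sub_le_of_norm_fderiv_le hdiff hbound hqkr hzkr
    have heq : h (z k) - h (q k) = a := by
      simp only [hhdef, hadef]
      rw [hgz (q k) (hqM k)]
      have : fderiv ℝ g (q k) (z k) - fderiv ℝ g (q k) (q k)
          = fderiv ℝ g (q k) (z k - q k) := by rw [map_sub]
      have ht := htan k
      rw [map_sub] at ht
      linarith [ht]
    rw [heq] at key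
    exact key
  -- Step B : ∃ m ∈ M, dist (z k) m ≤ 2 * ‖a‖ * ‖v‖
  have stepB : ∃ m ∈ M, dist (z k) m ≤ 2 * ‖a‖ * ‖v‖ := by
    by_cases ha : a = 0
    · exact ⟨z k, by rw [hM]; exact ha, by simp [dist_self]; positivity⟩
    · set δ : ℝ := 2 * ‖a‖ with hδdef
      have hδpos : 0 < δ := by
        have : 0 < ‖a‖ := norm_pos_iff.mpr ha
        positivity
      have hmem : ∀ t : ℝ, |t| ≤ δ → z k + t • v ∈ ball zbar r := by
        intro t ht
        have h1 : dist (z k + t • v) (z k) = |t| * ‖v‖ := by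
          rw [dist_eq_norm]
          simp [norm_smul, Real.norm_eq_abs]
        have h2 : dist (z k) zbar < r / 2 := hzk
        have h3 : |t| * ‖v‖ ≤ δ * ‖v‖ := by
          apply mul_le_mul_of_nonneg_right ht (norm_nonneg v)
        have h4 : δ * ‖v‖ < r / 2 := hgk
        calc dist (z k + t • v) zbar ≤ dist (z k + t • v) (z k) + dist (z k) zbar :=
              dist_triangle _ _ _
          _ < r := by rw [h1]; linarith
      -- key linearization estimate
      have hkey : ∀ t : ℝ, |t| ≤ δ → ‖g (z k + t • v) - a - t‖ ≤ |t| / 4 := by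
        intro t ht
        set h2 : EuclideanSpace ℝ (Fin n) → ℝ := fun x => g x - L x with hh2def
        have hdiff2 : ∀ x ∈ ball zbar r, DifferentiableAt ℝ h2 x := fun x _ =>
          (hgd x).sub (L.differentiableAt)
        have hbound2 : ∀ x ∈ ball zbar r, ‖fderiv ℝ h2 x‖ ≤ 1 / (4 * ‖v‖) := by
          intro x hx
          have hfd : fderiv ℝ h2 x = fderiv ℝ g x - L := by
            rw [hh2def, fderiv_fun_sub (hgd x) L.differentiableAt, L.fderiv]
          rw [hfd]
          exact le_trans (hball x hx).le (min_le_right _ _)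
        have key := (convex_ball zbar r).norm_image_sub_le_of_norm_fderiv_le hdiff2 hbound2
          hzkr (hmem t ht)
        have heq : h2 (z k + t • v) - h2 (z k) = g (z k + t • v) - a - t := by
          simp only [hh2def, hadef, map_add, map_smul, smul_eq_mul, hLv]
          ring
        have hnorm : ‖(z k + t • v) - z k‖ = |t| * ‖v‖ := by
          simp [norm_smul, Real.norm_eq_abs]
        rw [heq, hnorm] at key
        calc ‖g (z k + t • v) - a - t‖ ≤ 1 / (4 * ‖v‖) * (|t| * ‖v‖) := key
          _ = |t| / 4 := by field_simp
      have habs := abs_nonneg a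
      have hδabs : |δ| = δ := abs_of_pos hδpos
      have hnδabs : |(-δ)| = δ := by rw [abs_neg]; exact hδabs
      have hφδ : 0 ≤ g (z k + δ • v) := by
        have := hkey δ (le_of_eq hδabs)
        rw [hδabs, Real.norm_eq_abs, abs_le] at this
        have haa : -‖a‖ ≤ a := neg_abs_le a
        rw [Real.norm_eq_abs] at *
        linarith [this.1]
      have hφnδ : g (z k + (-δ) • v) ≤ 0 := by
        have := hkey (-δ) (le_of_eq hnδabs)
        rw [hnδabs, Real.norm_eq_abs, abs_le] at this
        have haa : a ≤ ‖a‖ := le_abs_self a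
        rw [Real.norm_eq_abs] at *
        linarith [this.2]
      have hφcont : ContinuousOn (fun t : ℝ => g (z k + t • v)) (Set.Icc (-δ) δ) := by
        apply Continuous.continuousOn
        exact hg.continuous.comp (continuous_const.add (continuous_id.smul continuous_const))
      have hIVT := intermediate_value_Icc (by linarith : -δ ≤ δ) hφcont
      have h0mem : (0:ℝ) ∈ Set.Icc (g (z k + (-δ) • v)) (g (z k + δ • v)) :=
        ⟨hφnδ, hφδ⟩
      obtain ⟨t, htmem, htval⟩ := hIVT h0mem
      refine ⟨z k + t • v, by rw [hM]; exact htval, ?_⟩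
      have hdist : dist (z k) (z k + t • v) = |t| * ‖v‖ := by
        rw [dist_comm, dist_eq_norm]
        simp [norm_smul, Real.norm_eq_abs]
      rw [hdist, hδdef]
      have htabs : |t| ≤ δ := abs_le.mpr ⟨htmem.1, htmem.2⟩
      calc |t| * ‖v‖ ≤ δ * ‖v‖ := mul_le_mul_of_nonneg_right htabs (norm_nonneg v)
        _ = 2 * ‖a‖ * ‖v‖ := by rw [hδdef]
  obtain ⟨m, hmM, hmdist⟩ := stepB
  have hinf : infDist (z k) M ≤ 2 * θ * ‖v‖ * ‖z k - q k‖ := by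
    calc infDist (z k) M ≤ dist (z k) m := infDist_le_dist_of_mem hmM
      _ ≤ 2 * ‖a‖ * ‖v‖ := hmdist
      _ ≤ 2 * (θ * ‖z k - q k‖) * ‖v‖ := by
          apply mul_le_mul_of_nonneg_right _ (norm_nonneg v)
          linarith [stepA]
      _ = 2 * θ * ‖v‖ * ‖z k - q k‖ := by ring
  have hratio : infDist (z k) M / ‖z k - q k‖ ≤ 2 * θ * ‖v‖ := by
    rw [div_le_iff₀ hd]
    exact hinf
  have hratnn : 0 ≤ infDist (z k) M / ‖z k - q k‖ :=
    div_nonneg (infDist_nonneg) (norm_nonneg _)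
  rw [Real.dist_eq, sub_zero, abs_of_nonneg hratnn]
  have hfinal : 2 * θ * ‖v‖ < ε := by
    have heq : 2 * (ε / (2 * ‖v‖ + 1)) * ‖v‖ = ε * (2 * ‖v‖) / (2 * ‖v‖ + 1) := by ring
    rw [hθdef, heq, div_lt_iff₀ (by positivity : (0:ℝ) < 2 * ‖v‖ + 1)]
    nlinarith [hvpos, hε]
  linarith
end

section
/- Let X, Y ⊂ R^n be closed convex with S := X ∩ Y having nonempty interior, and let z̄ ∈ ∂X ∩ ∂Y be such that ∂X and ∂Y are C¹ manifolds of dimension n−1 near z̄. Let (w_k) be a sequence of strictly centralized points converging to z̄. Then dist(PCRM(w_k), S)/dist(w_k, S) → 0. -/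
open Metric Filter Topology
open scoped RealInnerProductSpace



section Helpers

variable {E : Type*} [NormedAddCommGroup E] [InnerProductSpace ℝ E]

private lemma le_infDist'' {s : Set E} {x : E} {b : ℝ} (hs : s.Nonempty)
    (h : ∀ y ∈ s, b ≤ dist x y) : b ≤ infDist x s := by
  by_contra hlt
  push_neg at hlt
  obtain ⟨y, hy, hxy⟩ := (infDist_lt_iff hs).1 hlt
  exact absurd (h y hy) (not_le.2 hxy)

private lemma obtuse_norm_le {u c s : E} (h : ⟪u - c, s - c⟫ ≤ 0) : ‖u - c‖ ≤ ‖u - s‖ := by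
  have key : ‖u - s‖ ^ 2 = ‖u - c‖ ^ 2 - 2 * ⟪u - c, s - c⟫ + ‖s - c‖ ^ 2 := by
    have h2 : u - s = (u - c) - (s - c) := by abel
    rw [h2, @norm_sub_sq_real]
  nlinarith [norm_nonneg (u - s), norm_nonneg (u - c), sq_nonneg ‖s - c‖]

variable {X : Set E} {P : E → E}

private lemma proj_dist_le (hP : ∀ u, P u ∈ X ∧ ∀ x ∈ X, ⟪u - P u, x - P u⟫ ≤ 0)
    (u : E) {x : E} (hx : x ∈ X) : ‖u - P u‖ ≤ ‖u - x‖ :=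
  obtuse_norm_le ((hP u).2 x hx)

private lemma proj_infDist (hP : ∀ u, P u ∈ X ∧ ∀ x ∈ X, ⟪u - P u, x - P u⟫ ≤ 0)
    (u : E) : infDist u X = ‖u - P u‖ := by
  refine le_antisymm ?_ (le_infDist'' ⟨P u, (hP u).1⟩ fun y hy => ?_)
  · simpa [dist_eq_norm] using infDist_le_dist_of_mem (hP u).1
  · rw [dist_eq_norm]; exact proj_dist_le hP u hy

private lemma proj_mem_self (hP : ∀ u, P u ∈ X ∧ ∀ x ∈ X, ⟪u - P u, x - P u⟫ ≤ 0)
    {u : E} (hu : u ∈ X) : P u = u := by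
  have h := (hP u).2 u hu
  have hn : (0:ℝ) ≤ ⟪u - P u, u - P u⟫ := real_inner_self_nonneg
  have h0 : u - P u = 0 := inner_self_eq_zero.1 (le_antisymm h hn)
  exact (eq_of_sub_eq_zero h0).symm

private lemma proj_nonexpansive (hP : ∀ u, P u ∈ X ∧ ∀ x ∈ X, ⟪u - P u, x - P u⟫ ≤ 0)
    (u v : E) : ‖P u - P v‖ ≤ ‖u - v‖ := by
  have h1 := (hP u).2 (P v) (hP v).1
  have h2 := (hP v).2 (P u) (hP u).1
  have key : ‖P u - P v‖ ^ 2 ≤ ⟪u - v, P u - P v⟫ := by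
    rw [← real_inner_self_eq_norm_sq]
    simp only [inner_sub_left, inner_sub_right] at h1 h2 ⊢
    have c1 := real_inner_comm (P u) (P v)
    linarith
  have hcs := real_inner_le_norm (u - v) (P u - P v)
  nlinarith [norm_nonneg (P u - P v), norm_nonneg (u - v)]

private lemma proj_frontier (hP : ∀ u, P u ∈ X ∧ ∀ x ∈ X, ⟪u - P u, x - P u⟫ ≤ 0)
    (hXc : IsClosed X) {u : E} (hu : u ∉ X) : P u ∈ frontier X := by
  have hne : u - P u ≠ 0 := by
    intro h
    exact hu ((eq_of_sub_eq_zero h) ▸ (hP u).1)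
  rw [frontier, hXc.closure_eq]
  refine ⟨(hP u).1, fun hint => ?_⟩
  obtain ⟨r, hr, hball⟩ := Metric.isOpen_iff.1 isOpen_interior (P u) hint
  set t : ℝ := min (r / (2 * ‖u - P u‖)) 1 with ht
  have hnorm : 0 < ‖u - P u‖ := norm_pos_iff.2 hne
  have htpos : 0 < t := lt_min (by positivity) one_pos
  have hy : P u + t • (u - P u) ∈ X := by
    apply interior_subset
    apply hball
    rw [mem_ball, dist_eq_norm]
    have he : P u + t • (u - P u) - P u = t • (u - P u) := by abel
    rw [he, norm_smul, Real.norm_eq_abs, abs_of_pos htpos]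
    calc t * ‖u - P u‖ ≤ (r / (2 * ‖u - P u‖)) * ‖u - P u‖ := by
          apply mul_le_mul_of_nonneg_right (min_le_left _ _) (le_of_lt hnorm)
      _ = r / 2 := by field_simp
      _ < r := by linarith
  have h := (hP u).2 _ hy
  have he : P u + t • (u - P u) - P u = t • (u - P u) := by abel
  rw [he, real_inner_smul_right, real_inner_self_eq_norm_sq] at h
  nlinarith [mul_pos htpos (pow_pos hnorm 2)]

private lemma proj_tendsto (hP : ∀ u, P u ∈ X ∧ ∀ x ∈ X, ⟪u - P u, x - P u⟫ ≤ 0)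
    {z : E} (hz : z ∈ X) {y : ℕ → E} (hy : Tendsto y atTop (𝓝 z)) :
    Tendsto (fun k => P (y k)) atTop (𝓝 z) := by
  rw [tendsto_iff_dist_tendsto_zero] at hy ⊢
  refine squeeze_zero (fun k => dist_nonneg) (fun k => ?_) hy
  have hPz : P z = z := proj_mem_self hP hz
  calc dist (P (y k)) z = ‖P (y k) - P z‖ := by rw [dist_eq_norm, hPz]
    _ ≤ ‖y k - z‖ := proj_nonexpansive hP _ _
    _ = dist (y k) z := (dist_eq_norm _ _).symm

end Helpers

section Grad

variable {E : Type*} [NormedAddCommGroup E] [InnerProductSpace ℝ E]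

/-- The Riesz representation of the derivative of `g`. -/
noncomputable def rgrad [CompleteSpace E] (g : E → ℝ) (x : E) : E :=
  (InnerProductSpace.toDual ℝ E).symm (fderiv ℝ g x)

private lemma rgrad_inner [CompleteSpace E] (g : E → ℝ) (x y : E) :
    ⟪rgrad g x, y⟫ = fderiv ℝ g x y :=
  InnerProductSpace.toDual_symm_apply

private lemma rgrad_continuous [CompleteSpace E] {g : E → ℝ} (hg : ContDiff ℝ 1 g) :
    Continuous (rgrad g) :=
  (InnerProductSpace.toDual ℝ E).symm.continuous.comp (hg.continuous_fderiv one_ne_zero)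

private lemma rgrad_ne_zero [CompleteSpace E] {g : E → ℝ} {x : E} (h : fderiv ℝ g x ≠ 0) :
    rgrad g x ≠ 0 := by
  intro h0
  exact h (((InnerProductSpace.toDual ℝ E).symm.map_eq_zero_iff).1 h0)

/-- The unit normal determined by a `C¹` defining function. -/
noncomputable def unitN [CompleteSpace E] (g : E → ℝ) (x : E) : E :=
  ‖rgrad g x‖⁻¹ • rgrad g x

end Grad

section KeyLemmas

open Set

variable {E : Type*} [NormedAddCommGroup E] [InnerProductSpace ℝ E]

set_option maxHeartbeats 1600000 in
/-- Tangency lemma: a supporting direction at a boundary point of a closed set whose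
boundary is locally the zero set of a `C¹` function with nonvanishing derivative is
orthogonal to every direction killed by the derivative. -/
private lemma key_tangent [CompleteSpace E]
    {g : E → ℝ} (hg : ContDiff ℝ 1 g) {X U : Set E} (hXc : IsClosed X)
    (hbd : frontier X ∩ U = {x ∈ U | g x = 0})
    {q : E} (hq : q ∈ frontier X) (hqU : U ∈ 𝓝 q)
    (hq0 : fderiv ℝ g q ≠ 0)
    {v d : E} (hv : ∀ x ∈ X, ⟪x - q, v⟫ ≤ 0)
    (hd : fderiv ℝ g q d = 0) : ⟪d, v⟫ = 0 := by
  classical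
  have hXfr : frontier X ⊆ X := by
    intro x hx
    rw [← hXc.closure_eq]
    exact frontier_subset_closure hx
  set nq : E := rgrad g q with hnqdef
  have hnqne : nq ≠ 0 := rgrad_ne_zero hq0
  set c : ℝ := ‖nq‖ ^ 2 with hcdef
  have hc : 0 < c := pow_pos (norm_pos_iff.mpr hnqne) 2
  have hdiff : Differentiable ℝ g := hg.differentiable one_ne_zero
  have hcont : Continuous (fun x => fderiv ℝ g x) := hg.continuous_fderiv one_ne_zero
  have hFn : Continuous fun x => fderiv ℝ g x nq := hcont.clm_apply continuous_const
  have hFd : Continuous fun x => fderiv ℝ g x d := hcont.clm_apply continuous_const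
  have hqUmem : q ∈ U := mem_of_mem_nhds hqU
  have hgq : g q = 0 := by
    have h1 : q ∈ frontier X ∩ U := ⟨hq, hqUmem⟩
    rw [hbd] at h1
    exact h1.2
  suffices h : ∀ m : ℝ, 0 < m → |⟪d, v⟫| ≤ m * (‖nq‖ * ‖v‖ + 1) by
    by_contra habs
    have habs' : 0 < |⟪d, v⟫| := abs_pos.2 habs
    have hK : (0:ℝ) < ‖nq‖ * ‖v‖ + 1 := by positivity
    have h1 := h (|⟪d, v⟫| / (2 * (‖nq‖ * ‖v‖ + 1))) (by positivity)
    have h2 : |⟪d, v⟫| / (2 * (‖nq‖ * ‖v‖ + 1)) * (‖nq‖ * ‖v‖ + 1) = |⟪d, v⟫| / 2 := by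
      field_simp
    rw [h2] at h1
    linarith
  intro m hm
  -- choose a good radius δ
  have hAopen : IsOpen ({x | c/2 < fderiv ℝ g x nq} ∩ {x | |fderiv ℝ g x d| < m*c/8}) :=
    (isOpen_lt continuous_const hFn).inter (isOpen_lt hFd.abs continuous_const)
  have hAq : q ∈ {x | c/2 < fderiv ℝ g x nq} ∩ {x | |fderiv ℝ g x d| < m*c/8} := by
    constructor
    · show c/2 < fderiv ℝ g q nq
      have he : fderiv ℝ g q nq = c := by
        rw [← rgrad_inner, ← hnqdef, real_inner_self_eq_norm_sq, hcdef]
      rw [he]; linarith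
    · show |fderiv ℝ g q d| < m*c/8
      rw [hd, abs_zero]; positivity
  have hAnhds : ({x | c/2 < fderiv ℝ g x nq} ∩ {x | |fderiv ℝ g x d| < m*c/8}) ∩ U ∈ 𝓝 q :=
    Filter.inter_mem (hAopen.mem_nhds hAq) hqU
  obtain ⟨δ, hδpos, hδsub⟩ := Metric.nhds_basis_closedBall.mem_iff.1 hAnhds
  have hball : ∀ x ∈ closedBall q δ,
      c/2 < fderiv ℝ g x nq ∧ |fderiv ℝ g x d| ≤ m*c/8 ∧ x ∈ U := by
    intro x hx
    have h1 := hδsub hx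
    exact ⟨h1.1.1, le_of_lt h1.1.2, h1.2⟩
  have hmem : ∀ τ s : ℝ, |τ| * (‖d‖ + m * ‖nq‖) ≤ δ → |s| ≤ m * |τ| →
      q + τ • d + s • nq ∈ closedBall q δ := by
    intro τ s hτδ hs
    rw [mem_closedBall, dist_eq_norm]
    have he : q + τ • d + s • nq - q = τ • d + s • nq := by abel
    rw [he]
    calc ‖τ • d + s • nq‖ ≤ ‖τ • d‖ + ‖s • nq‖ := norm_add_le _ _
      _ = |τ| * ‖d‖ + |s| * ‖nq‖ := by
          rw [norm_smul, norm_smul, Real.norm_eq_abs, Real.norm_eq_abs]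
      _ ≤ |τ| * ‖d‖ + (m * |τ|) * ‖nq‖ :=
          add_le_add_right (mul_le_mul_of_nonneg_right hs (norm_nonneg _)) _
      _ = |τ| * (‖d‖ + m * ‖nq‖) := by ring
      _ ≤ δ := hτδ
  -- the IVT claim: a zero of g close to q + τ • d
  have hclaim : ∀ τ : ℝ, τ ≠ 0 → |τ| * (‖d‖ + m * ‖nq‖) ≤ δ →
      ∃ s : ℝ, |s| ≤ m * |τ| ∧ g (q + τ • d + s • nq) = 0 := by
    intro τ hτ0 hτδ
    have hτpos : 0 < |τ| := abs_pos.2 hτ0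
    have hmτ : 0 < m * |τ| := by positivity
    set φ : ℝ → ℝ := fun s => g (q + τ • d + s • nq) with hφdef
    have hφd : ∀ s : ℝ, HasDerivAt φ (fderiv ℝ g (q + τ • d + s • nq) nq) s := by
      intro s
      have h1 : HasDerivAt (fun s : ℝ => q + τ • d + s • nq) nq s := by
        simpa using ((hasDerivAt_id s).smul_const nq).const_add (q + τ • d)
      exact (hdiff _).hasFDerivAt.comp_hasDerivAt s h1
    have hφcont : Continuous φ := hg.continuous.comp (by continuity)
    -- bound |φ 0|
    have hA : |φ 0| ≤ m*c/8 * |τ| := by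
      set ψ : ℝ → ℝ := fun τ' => g (q + τ' • d) with hψdef
      have hψd : ∀ τ' : ℝ, HasDerivAt ψ (fderiv ℝ g (q + τ' • d) d) τ' := by
        intro τ'
        have h1 : HasDerivAt (fun τ' : ℝ => q + τ' • d) d τ' := by
          simpa using ((hasDerivAt_id τ').smul_const d).const_add q
        exact (hdiff _).hasFDerivAt.comp_hasDerivAt τ' h1
      have hψb : ∀ τ' ∈ closedBall (0:ℝ) |τ|, ‖fderiv ℝ g (q + τ' • d) d‖ ≤ m*c/8 := by
        intro τ' hτ'
        have hmem' : q + τ' • d ∈ closedBall q δ := by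
          rw [mem_closedBall, dist_eq_norm]
          have he : q + τ' • d - q = τ' • d := by abel
          rw [he, norm_smul, Real.norm_eq_abs]
          have h1 : |τ'| ≤ |τ| := by simpa using hτ'
          calc |τ'| * ‖d‖ ≤ |τ| * ‖d‖ := mul_le_mul_of_nonneg_right h1 (norm_nonneg _)
            _ ≤ |τ| * (‖d‖ + m * ‖nq‖) := by nlinarith [norm_nonneg nq, abs_nonneg τ]
            _ ≤ δ := hτδ
        exact (hball _ hmem').2.1
      have hmvt := Convex.norm_image_sub_le_of_norm_hasDerivWithin_le
        (fun x _ => (hψd x).hasDerivWithinAt) hψb (convex_closedBall _ _)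
        (mem_closedBall_self (abs_nonneg τ))
        (by simp [mem_closedBall, dist_eq_norm] : τ ∈ closedBall (0:ℝ) |τ|)
      have hψ0 : ψ 0 = 0 := by simp [hψdef, hgq]
      have hψτ : ψ τ = φ 0 := by simp [hψdef, hφdef]
      rw [hψ0, hψτ, sub_zero, sub_zero] at hmvt
      simpa [Real.norm_eq_abs] using hmvt
    have hφ0lb : -(m*c/8*|τ|) ≤ φ 0 := by
      have := neg_abs_le (φ 0)
      linarith
    have hφ0ub : φ 0 ≤ m*c/8*|τ| := le_trans (le_abs_self _) hA
    -- upper endpoint positive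
    have hup : 0 < φ (m * |τ|) := by
      obtain ⟨ξ, hξ, hslope⟩ := exists_hasDerivAt_eq_slope φ
        (fun s => fderiv ℝ g (q + τ • d + s • nq) nq) hmτ
        hφcont.continuousOn (fun x _ => hφd x)
      have hptξ : q + τ • d + ξ • nq ∈ closedBall q δ := by
        apply hmem _ _ hτδ
        rw [abs_of_pos hξ.1]
        exact le_of_lt hξ.2
      have hd2 : c/2 < (φ (m * |τ|) - φ 0) / (m * |τ| - 0) := by
        rw [← hslope]; exact (hball _ hptξ).1
      rw [sub_zero] at hd2
      have h8 : c/2 * (m * |τ|) < φ (m * |τ|) - φ 0 := (lt_div_iff₀ hmτ).1 hd2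
      linarith [mul_pos hc hmτ]
    -- lower endpoint negative
    have hdown : φ (-(m * |τ|)) < 0 := by
      obtain ⟨ξ, hξ, hslope⟩ := exists_hasDerivAt_eq_slope φ
        (fun s => fderiv ℝ g (q + τ • d + s • nq) nq)
        (by linarith : -(m * |τ|) < 0)
        hφcont.continuousOn (fun x _ => hφd x)
      have hptξ : q + τ • d + ξ • nq ∈ closedBall q δ := by
        apply hmem _ _ hτδ
        rw [abs_of_neg hξ.2]
        linarith [hξ.1]
      have hd2 : c/2 < (φ 0 - φ (-(m * |τ|))) / (0 - -(m * |τ|)) := by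
        rw [← hslope]; exact (hball _ hptξ).1
      rw [zero_sub, neg_neg] at hd2
      have h8 : c/2 * (m * |τ|) < φ 0 - φ (-(m * |τ|)) := (lt_div_iff₀ hmτ).1 hd2
      linarith [mul_pos hc hmτ]
    obtain ⟨s, hsmem, hφs⟩ := intermediate_value_Icc
      (by linarith : -(m * |τ|) ≤ m * |τ|) hφcont.continuousOn
      (⟨le_of_lt hdown, le_of_lt hup⟩ : (0:ℝ) ∈ Icc (φ (-(m * |τ|))) (φ (m * |τ|)))
    exact ⟨s, abs_le.2 ⟨hsmem.1, hsmem.2⟩, hφs⟩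
  -- from the claim to the inner-product bound
  have hpost : ∀ τ : ℝ, τ ≠ 0 → |τ| * (‖d‖ + m * ‖nq‖) ≤ δ →
      τ * ⟪d, v⟫ ≤ m * |τ| * (‖nq‖ * ‖v‖) := by
    intro τ hτ0 hτδ
    obtain ⟨s, hs, hgs⟩ := hclaim τ hτ0 hτδ
    have hx : q + τ • d + s • nq ∈ closedBall q δ := hmem τ s hτδ hs
    have hxU : q + τ • d + s • nq ∈ U := (hball _ hx).2.2
    have hxfr : q + τ • d + s • nq ∈ frontier X := by
      have h1 : q + τ • d + s • nq ∈ {x ∈ U | g x = 0} := ⟨hxU, hgs⟩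
      rw [← hbd] at h1
      exact h1.1
    have hineq := hv _ (hXfr hxfr)
    have he : q + τ • d + s • nq - q = τ • d + s • nq := by abel
    rw [he, inner_add_left, real_inner_smul_left, real_inner_smul_left] at hineq
    have h1 : -(s * ⟪nq, v⟫) ≤ |s * ⟪nq, v⟫| := neg_le_abs _
    have h2 : |s * ⟪nq, v⟫| ≤ m * |τ| * (‖nq‖ * ‖v‖) := by
      rw [abs_mul]
      exact mul_le_mul hs (abs_real_inner_le_norm _ _) (abs_nonneg _) (by positivity)
    linarith
  set t : ℝ := δ / (‖d‖ + m * ‖nq‖ + 1) with htdef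
  have hDnn : (0:ℝ) ≤ ‖d‖ + m * ‖nq‖ := by positivity
  have htpos : 0 < t := by rw [htdef]; positivity
  have hcond : |t| * (‖d‖ + m * ‖nq‖) ≤ δ := by
    rw [abs_of_pos htpos]
    have he : t * (‖d‖ + m * ‖nq‖ + 1) = δ := by
      rw [htdef]; field_simp
    nlinarith
  have hplus := hpost t (ne_of_gt htpos) hcond
  have hminus := hpost (-t) (by simpa using (ne_of_gt htpos)) (by rwa [abs_neg])
  rw [abs_of_pos htpos] at hplus
  rw [abs_neg, abs_of_pos htpos] at hminus
  have hK : ⟪d, v⟫ ≤ m * (‖nq‖ * ‖v‖) := by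
    have h' : t * ⟪d, v⟫ ≤ t * (m * (‖nq‖ * ‖v‖)) := by linarith
    exact le_of_mul_le_mul_left h' htpos
  have hK' : -(m * (‖nq‖ * ‖v‖)) ≤ ⟪d, v⟫ := by
    have h' : t * (-⟪d, v⟫) ≤ t * (m * (‖nq‖ * ‖v‖)) := by linarith
    have := le_of_mul_le_mul_left h' htpos
    linarith
  have habs : |⟪d, v⟫| ≤ m * (‖nq‖ * ‖v‖) := abs_le.2 ⟨hK', hK⟩
  have hfin : m * (‖nq‖ * ‖v‖) ≤ m * (‖nq‖ * ‖v‖ + 1) := by linarith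
  linarith [abs_le.1 habs]

/-- A unit supporting direction at a boundary point of a `C¹`-boundary closed set is
`±` the unit normal given by the defining function. -/
private lemma key_normal [CompleteSpace E]
    {g : E → ℝ} (hg : ContDiff ℝ 1 g) {X U : Set E} (hXc : IsClosed X)
    (hbd : frontier X ∩ U = {x ∈ U | g x = 0})
    {q : E} (hq : q ∈ frontier X) (hqU : U ∈ 𝓝 q)
    (hq0 : fderiv ℝ g q ≠ 0)
    {v : E} (hv : ∀ x ∈ X, ⟪x - q, v⟫ ≤ 0) (hv1 : ‖v‖ = 1) :
    v = unitN g q ∨ v = -unitN g q := by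
  have hnqne : rgrad g q ≠ 0 := rgrad_ne_zero hq0
  have hnn : (0:ℝ) < ‖rgrad g q‖ := norm_pos_iff.2 hnqne
  set nq : E := rgrad g q with hnqdef
  set u : E := unitN g q with hudef
  have huval : u = ‖nq‖⁻¹ • nq := rfl
  have hu1 : ‖u‖ = 1 := by
    rw [huval, norm_smul, Real.norm_eq_abs, abs_of_pos (inv_pos.2 hnn),
      inv_mul_cancel₀ (ne_of_gt hnn)]
  set d : E := v - ⟪v, u⟫ • u with hddef
  have hnqu : ⟪nq, u⟫ = ‖nq‖ := by
    rw [huval, real_inner_smul_right, real_inner_self_eq_norm_sq]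
    field_simp
  have hfd : fderiv ℝ g q d = 0 := by
    rw [← rgrad_inner, ← hnqdef, hddef, inner_sub_right, real_inner_smul_right, hnqu]
    have h2 : ⟪v, u⟫ = ‖nq‖⁻¹ * ⟪v, nq⟫ := by rw [huval, real_inner_smul_right]
    rw [h2, real_inner_comm v nq]
    field_simp
    ring
  have hdv : ⟪d, v⟫ = 0 := key_tangent hg hXc hbd hq hqU hq0 hv hfd
  have huu : ⟪u, u⟫ = (1:ℝ) := by
    rw [real_inner_self_eq_norm_sq, hu1]; norm_num
  have hdu : ⟪d, u⟫ = 0 := by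
    rw [hddef, inner_sub_left, real_inner_smul_left, huu]
    ring
  have hd0 : d = 0 := by
    have hdd : ⟪d, d⟫ = 0 := by
      nth_rewrite 2 [hddef]
      rw [inner_sub_right, real_inner_smul_right, hdv, hdu]
      ring
    exact inner_self_eq_zero.1 hdd
  have hveq : v = ⟪v, u⟫ • u := by
    rw [hddef] at hd0
    exact sub_eq_zero.1 hd0
  have habs : |⟪v, u⟫| = 1 := by
    have hn := congrArg norm hveq
    rw [norm_smul, Real.norm_eq_abs, hu1, mul_one, hv1] at hn
    exact hn.symm
  rcases (abs_eq (by norm_num : (0:ℝ) ≤ 1)).1 habs with h | h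
  · left; rw [hveq, h, one_smul]
  · right; rw [hveq, h, neg_smul, one_smul]

end KeyLemmas

open Set in
/-- Main quantitative lemma for one of the two sets: the distance from the candidate
points `y₂ k` to `X` is superlinear in `‖y₂ k - P (y₁ k)‖`. -/
private lemma aux_seq {E : Type*} [NormedAddCommGroup E] [InnerProductSpace ℝ E] [CompleteSpace E]
    {X U : Set E} (hXc : IsClosed X)
    {P : E → E} (hP : ∀ u, P u ∈ X ∧ ∀ x ∈ X, ⟪u - P u, x - P u⟫ ≤ 0)
    {g : E → ℝ} (hg : ContDiff ℝ 1 g)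
    {zbar : E} (hzfr : zbar ∈ frontier X) (hU : U ∈ 𝓝 zbar)
    (hbd : frontier X ∩ U = {x ∈ U | g x = 0})
    (hgrad : ∀ x ∈ U, fderiv ℝ g x ≠ 0)
    {x₀ : E} {δ : ℝ} (hδ : 0 < δ) (hballX : ball x₀ δ ⊆ X)
    {y₁ y₂ : ℕ → E} (hy₁ : Tendsto y₁ atTop (𝓝 zbar)) (hy₂ : Tendsto y₂ atTop (𝓝 zbar))
    (hy₁X : ∀ k, y₁ k ∉ X)
    (hhalf : ∀ k, ⟪y₂ k - P (y₁ k), y₁ k - P (y₁ k)⟫ ≤ 0) :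
    ∃ B : ℕ → ℝ, (∀ k, 0 ≤ B k) ∧ Tendsto B atTop (𝓝 0) ∧
      ∀ᶠ k in atTop, infDist (y₂ k) X ≤ ‖y₂ k - P (y₁ k)‖ * B k := by
  classical
  have hzX : zbar ∈ X := by
    have hsub : frontier X ⊆ X := by
      intro x hx; rw [← hXc.closure_eq]; exact frontier_subset_closure hx
    exact hsub hzfr
  have hzU : zbar ∈ U := mem_of_mem_nhds hU
  set a : ℕ → E := fun k => P (y₁ k) with hadef
  set p : ℕ → E := fun k => P (y₂ k) with hpdef
  have ha : Tendsto a atTop (𝓝 zbar) := proj_tendsto hP hzX hy₁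
  have hp : Tendsto p atTop (𝓝 zbar) := proj_tendsto hP hzX hy₂
  have hafr : ∀ k, a k ∈ frontier X := fun k => proj_frontier hP hXc (hy₁X k)
  set N : E → E := unitN g with hNdef
  have hNcont : ContinuousAt N zbar := by
    have h1 : ContinuousAt (rgrad g) zbar := (rgrad_continuous hg).continuousAt
    have h2 : rgrad g zbar ≠ 0 := rgrad_ne_zero (hgrad _ hzU)
    exact ((h1.norm.inv₀ (norm_ne_zero_iff.2 h2)).smul h1)
  have hsupp : ∀ q w : E, ‖w‖ = 1 → (∀ x ∈ X, ⟪x - q, w⟫ ≤ 0) → ⟪x₀ - q, w⟫ ≤ -(δ/2) := by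
    intro q w hw1 hw
    have hx' : x₀ + (δ/2) • w ∈ X := by
      apply hballX
      rw [mem_ball, dist_eq_norm]
      have he : x₀ + (δ/2) • w - x₀ = (δ/2) • w := by abel
      rw [he, norm_smul, Real.norm_eq_abs, abs_of_pos (by linarith), hw1]
      linarith
    have h0 := hw _ hx'
    rw [show x₀ + (δ/2) • w - q = (x₀ - q) + (δ/2) • w by abel,
      inner_add_left, real_inner_smul_left, real_inner_self_eq_norm_sq, hw1] at h0
    nlinarith
  set v : ℕ → E := fun k => ‖y₁ k - a k‖⁻¹ • (y₁ k - a k) with hvdef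
  have hyane : ∀ k, y₁ k - a k ≠ 0 := by
    intro k h
    exact hy₁X k (eq_of_sub_eq_zero h ▸ (hP (y₁ k)).1)
  have hv1 : ∀ k, ‖v k‖ = 1 := by
    intro k
    have := norm_pos_iff.2 (hyane k)
    rw [hvdef]
    simp only [norm_smul, Real.norm_eq_abs, abs_of_pos (inv_pos.2 this)]
    field_simp
  have hvsupp : ∀ k, ∀ x ∈ X, ⟪x - a k, v k⟫ ≤ 0 := by
    intro k x hx
    have h0 := (hP (y₁ k)).2 x hx
    rw [hvdef, real_inner_smul_right, real_inner_comm]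
    have hinv : (0:ℝ) ≤ ‖y₁ k - a k‖⁻¹ := inv_nonneg.2 (norm_nonneg _)
    exact mul_nonpos_of_nonneg_of_nonpos hinv h0
  obtain ⟨ρ, hρpos, hρU⟩ := Metric.mem_nhds_iff.1 hU
  have hUnhds : ∀ q : E, q ∈ ball zbar (ρ/2) → U ∈ 𝓝 q := by
    intro q hq
    apply Filter.mem_of_superset (ball_mem_nhds q (by linarith : (0:ℝ) < ρ/2))
    intro x hx
    apply hρU
    rw [mem_ball] at *
    calc dist x zbar ≤ dist x q + dist q zbar := dist_triangle _ _ _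
      _ < ρ/2 + ρ/2 := add_lt_add hx hq
      _ = ρ := by ring
  have hUmem : ∀ q : E, q ∈ ball zbar (ρ/2) → q ∈ U := fun q hq => hρU (by
    rw [mem_ball] at *; linarith)
  have hE1 : ∀ᶠ k in atTop, a k ∈ ball zbar (ρ/2) :=
    ha (ball_mem_nhds _ (by linarith))
  have hE2 : ∀ᶠ k in atTop, p k ∈ ball zbar (ρ/2) :=
    hp (ball_mem_nhds _ (by linarith))
  have hvpm : ∀ᶠ k in atTop, v k = N (a k) ∨ v k = -N (a k) := by
    filter_upwards [hE1] with k hk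
    exact key_normal hg hXc hbd (hafr k) (hUnhds _ hk) (hgrad _ (hUmem _ hk))
      (hvsupp k) (hv1 k)
  set L : ℝ := ⟪x₀ - zbar, N zbar⟫ with hLdef
  have hftend : Tendsto (fun k => ⟪x₀ - (a k), N (a k)⟫) atTop (𝓝 L) := by
    have h1 : Tendsto (fun k => x₀ - a k) atTop (𝓝 (x₀ - zbar)) :=
      tendsto_const_nhds.sub ha
    have h2 : Tendsto (fun k => N (a k)) atTop (𝓝 (N zbar)) := hNcont.tendsto.comp ha
    exact h1.inner h2
  have hfabs : ∀ᶠ k in atTop, δ/2 ≤ |⟪x₀ - (a k), N (a k)⟫| := by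
    filter_upwards [hvpm] with k hk
    have h0 := hsupp (a k) (v k) (hv1 k) (hvsupp k)
    rcases hk with h | h
    · rw [h] at h0
      rw [abs_of_nonpos (by linarith)]
      linarith
    · rw [h, inner_neg_right] at h0
      rw [abs_of_nonneg (by linarith)]
      linarith
  have hLabs : δ/2 ≤ |L| := ge_of_tendsto (hftend.abs) hfabs
  set σ : ℝ := if 0 < L then -1 else 1 with hσdef
  have hσcases : σ = 1 ∨ σ = -1 := by
    rw [hσdef]; split <;> simp
  have hσL : σ * L ≤ -(δ/2) := by
    by_cases hL : 0 < L
    · rw [hσdef, if_pos hL]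
      rw [abs_of_pos hL] at hLabs
      linarith
    · rw [hσdef, if_neg hL]
      push_neg at hL
      rw [abs_of_nonpos hL] at hLabs
      linarith
  set M : E → E := fun x => σ • N x with hMdef
  have hMcont : ContinuousAt M zbar := continuousAt_const.smul hNcont
  have hMa : Tendsto (fun k => ⟪x₀ - (a k), M (a k)⟫) atTop (𝓝 (σ * L)) := by
    have he : (fun k => ⟪x₀ - (a k), M (a k)⟫) = fun k => σ * ⟪x₀ - (a k), N (a k)⟫ := by
      funext k; rw [hMdef]; exact real_inner_smul_right _ _ _
    rw [he]
    exact hftend.const_mul σ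
  have hMp : Tendsto (fun k => ⟪x₀ - (p k), M (p k)⟫) atTop (𝓝 (σ * L)) := by
    have h1 : Tendsto (fun k => x₀ - p k) atTop (𝓝 (x₀ - zbar)) :=
      tendsto_const_nhds.sub hp
    have h2 : Tendsto (fun k => M (p k)) atTop (𝓝 (M zbar)) := hMcont.tendsto.comp hp
    have h3 : Tendsto (fun k => ⟪x₀ - (p k), M (p k)⟫) atTop (𝓝 (⟪x₀ - zbar, M zbar⟫)) :=
      h1.inner h2
    have he : ⟪x₀ - zbar, M zbar⟫ = σ * L := by
      rw [hMdef]; exact real_inner_smul_right _ _ _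
    rwa [he] at h3
  have hE3 : ∀ᶠ k in atTop, ⟪x₀ - (a k), M (a k)⟫ < δ/2 :=
    hMa.eventually_lt_const (by linarith)
  have hE4 : ∀ᶠ k in atTop, ⟪x₀ - (p k), M (p k)⟫ < δ/2 :=
    hMp.eventually_lt_const (by linarith)
  have hvM : ∀ᶠ k in atTop, v k = M (a k) := by
    filter_upwards [hvpm, hE3] with k hk h3
    have h0 := hsupp (a k) (v k) (hv1 k) (hvsupp k)
    have hkM : v k = M (a k) ∨ v k = -(M (a k)) := by
      rcases hσcases with hσ | hσ <;> rw [hMdef] <;>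
        simp only [hσ, one_smul, neg_one_smul, neg_neg] <;> tauto
    rcases hkM with h | h
    · exact h
    · exfalso
      rw [h, inner_neg_right] at h0
      linarith
  have hv'M : ∀ᶠ k in atTop, y₂ k ∉ X →
      ‖y₂ k - p k‖⁻¹ • (y₂ k - p k) = M (p k) := by
    filter_upwards [hE2, hE4] with k hk h4 hout
    have hne : y₂ k - p k ≠ 0 := by
      intro h
      exact hout (eq_of_sub_eq_zero h ▸ (hP (y₂ k)).1)
    set u : E := ‖y₂ k - p k‖⁻¹ • (y₂ k - p k) with hudef
    have hu1 : ‖u‖ = 1 := by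
      have := norm_pos_iff.2 hne
      rw [hudef]
      simp only [norm_smul, Real.norm_eq_abs, abs_of_pos (inv_pos.2 this)]
      field_simp
    have husupp : ∀ x ∈ X, ⟪x - p k, u⟫ ≤ 0 := by
      intro x hx
      have h0 := (hP (y₂ k)).2 x hx
      rw [hudef, real_inner_smul_right, real_inner_comm]
      exact mul_nonpos_of_nonneg_of_nonpos (inv_nonneg.2 (norm_nonneg _)) h0
    have hpfr : p k ∈ frontier X := proj_frontier hP hXc hout
    have hkey := key_normal hg hXc hbd hpfr (hUnhds _ hk) (hgrad _ (hUmem _ hk)) husupp hu1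
    have h0 := hsupp (p k) u hu1 husupp
    have hkM : u = M (p k) ∨ u = -(M (p k)) := by
      rcases hσcases with hσ | hσ <;> rw [hMdef] <;>
        simp only [hσ, one_smul, neg_one_smul, neg_neg] <;> tauto
    rcases hkM with h | h
    · exact h
    · exfalso
      rw [h, inner_neg_right] at h0
      linarith
  refine ⟨fun k => ‖M (p k) - M (a k)‖, fun k => norm_nonneg _, ?_, ?_⟩
  · have h1 : Tendsto (fun k => M (p k) - M (a k)) atTop (𝓝 0) := by
      have := (hMcont.tendsto.comp hp).sub (hMcont.tendsto.comp ha)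
      simpa using this
    simpa [Function.comp_def] using (continuous_norm.tendsto (0:E)).comp h1
  · filter_upwards [hvM, hv'M] with k hvk hv'k
    by_cases hy2 : y₂ k ∈ X
    · rw [infDist_zero_of_mem hy2]
      exact mul_nonneg (norm_nonneg _) (norm_nonneg _)
    · have hne : y₂ k - p k ≠ 0 := by
        intro h
        exact hy2 (eq_of_sub_eq_zero h ▸ (hP (y₂ k)).1)
      have hnpos : (0:ℝ) < ‖y₂ k - p k‖ := norm_pos_iff.2 hne
      set u : E := ‖y₂ k - p k‖⁻¹ • (y₂ k - p k) with hudef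
      have huk : u = M (p k) := hv'k hy2
      have h1 : infDist (y₂ k) X = ‖y₂ k - p k‖ := proj_infDist hP _
      have h2 : ‖y₂ k - p k‖ = ⟪y₂ k - p k, u⟫ := by
        rw [hudef, real_inner_smul_right, real_inner_self_eq_norm_sq]
        field_simp
      have h3 : ⟪a k - p k, u⟫ ≤ 0 := by
        have h0 := (hP (y₂ k)).2 (a k) (hP (y₁ k)).1
        rw [hudef, real_inner_smul_right, real_inner_comm]
        exact mul_nonpos_of_nonneg_of_nonpos (inv_nonneg.2 (norm_nonneg _)) h0
      have h4 : ⟪y₂ k - p k, u⟫ ≤ ⟪y₂ k - a k, u⟫ := by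
        have he2 : ⟪y₂ k - a k, u⟫ = ⟪y₂ k - p k, u⟫ - ⟪a k - p k, u⟫ := by
          rw [← inner_sub_left]
          congr 1
          abel
        rw [he2]
        linarith
      have h5 : ⟪y₂ k - a k, v k⟫ ≤ 0 := by
        have h0 := hhalf k
        rw [hvdef]
        simp only []
        rw [real_inner_smul_right]
        exact mul_nonpos_of_nonneg_of_nonpos (inv_nonneg.2 (norm_nonneg _)) h0
      have h6 : ⟪y₂ k - a k, u⟫ = ⟪y₂ k - a k, v k⟫ + ⟪y₂ k - a k, u - v k⟫ := by
        have he : v k + (u - v k) = u := by abel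
        rw [← inner_add_right] at *
        rw [he]
      have h7 : ⟪y₂ k - a k, u - v k⟫ ≤ ‖y₂ k - a k‖ * ‖u - v k‖ :=
        real_inner_le_norm _ _
      calc infDist (y₂ k) X = ‖y₂ k - p k‖ := h1
        _ = ⟪y₂ k - p k, u⟫ := h2
        _ ≤ ⟪y₂ k - a k, u⟫ := h4
        _ = ⟪y₂ k - a k, v k⟫ + ⟪y₂ k - a k, u - v k⟫ := h6
        _ ≤ 0 + ‖y₂ k - a k‖ * ‖u - v k‖ := add_le_add h5 h7
        _ = ‖y₂ k - a k‖ * ‖M (p k) - M (a k)‖ := by rw [zero_add, huk, hvk]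


/-- near \`zbar\` the boundaries of X and Y are C¹ manifolds of
dimension n-1, formalized as zero level sets (within a neighborhood U) of C¹
functions with nonvanishing derivative; for strictly centralized points, PCRM
is the projection onto the intersection of the two supporting half-spaces. -/
theorem stmt_19 {n : ℕ} {X Y : Set (EuclideanSpace ℝ (Fin n))}
    (hXc : IsClosed X) (hXconv : Convex ℝ X)
    (hYc : IsClosed Y) (hYconv : Convex ℝ Y)
    (hSint : (interior (X ∩ Y)).Nonempty)
    (PX PY : EuclideanSpace ℝ (Fin n) → EuclideanSpace ℝ (Fin n))
    (hPX : ∀ u, PX u ∈ X ∧ ∀ x ∈ X, ⟪u - PX u, x - PX u⟫ ≤ 0)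
    (hPY : ∀ u, PY u ∈ Y ∧ ∀ x ∈ Y, ⟪u - PY u, x - PY u⟫ ≤ 0)
    (zbar : EuclideanSpace ℝ (Fin n)) (hzbar : zbar ∈ frontier X ∩ frontier Y)
    -- C¹ smoothness of the boundaries near zbar:
    (U : Set (EuclideanSpace ℝ (Fin n))) (hU : U ∈ 𝓝 zbar)
    (gX gY : EuclideanSpace ℝ (Fin n) → ℝ)
    (hgX : ContDiff ℝ 1 gX) (hgY : ContDiff ℝ 1 gY)
    (hXbd : frontier X ∩ U = {x ∈ U | gX x = 0})
    (hYbd : frontier Y ∩ U = {x ∈ U | gY x = 0})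
    (hgradX : ∀ x ∈ U, fderiv ℝ gX x ≠ 0)
    (hgradY : ∀ x ∈ U, fderiv ℝ gY x ≠ 0)
    -- local error bound (implied by nonempty interior of S):
    (V : Set (EuclideanSpace ℝ (Fin n))) (hV : V ∈ 𝓝 zbar)
    (ω : ℝ) (hω : ω ∈ Set.Ioo (0:ℝ) 1)
    (hEB : ∀ v ∈ V, ω * infDist v (X ∩ Y) ≤ max (infDist v X) (infDist v Y))
    -- PCRM on strictly centralized points:
    (C : EuclideanSpace ℝ (Fin n) → EuclideanSpace ℝ (Fin n))
    (hC : ∀ w : EuclideanSpace ℝ (Fin n), ⟪w - PX w, w - PY w⟫ < 0 →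
      C w ∈ {v | ⟪v - PX w, w - PX w⟫ ≤ 0} ∩ {v | ⟪v - PY w, w - PY w⟫ ≤ 0} ∧
      ∀ v ∈ {v | ⟪v - PX w, w - PX w⟫ ≤ 0} ∩ {v | ⟪v - PY w, w - PY w⟫ ≤ 0},
        ⟪w - C w, v - C w⟫ ≤ 0)
    (w : ℕ → EuclideanSpace ℝ (Fin n))
    (hwsc : ∀ k, ⟪w k - PX (w k), w k - PY (w k)⟫ < 0)
    (hwlim : Tendsto w atTop (𝓝 zbar)) :
    Tendsto (fun k => infDist (C (w k)) (X ∩ Y) / infDist (w k) (X ∩ Y))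
      atTop (𝓝 0) := by
  classical
  have hωpos : 0 < ω := hω.1
  have hSc : IsClosed (X ∩ Y) := hXc.inter hYc
  have hzX : zbar ∈ X := by
    have : frontier X ⊆ X := by
      intro x hx; rw [← hXc.closure_eq]; exact frontier_subset_closure hx
    exact this hzbar.1
  have hzY : zbar ∈ Y := by
    have : frontier Y ⊆ Y := by
      intro x hx; rw [← hYc.closure_eq]; exact frontier_subset_closure hx
    exact this hzbar.2
  have hzS : zbar ∈ X ∩ Y := ⟨hzX, hzY⟩
  have hSne : (X ∩ Y).Nonempty := ⟨zbar, hzS⟩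
  obtain ⟨x₀, hx₀⟩ := hSint
  obtain ⟨δ, hδpos, hδball⟩ := Metric.isOpen_iff.1 isOpen_interior x₀ hx₀
  have hballS : ball x₀ δ ⊆ X ∩ Y := hδball.trans interior_subset
  -- strictly centralized points are outside both sets
  have hwX : ∀ k, w k ∉ X := by
    intro k hk
    have h0 := hwsc k
    rw [proj_mem_self hPX hk, sub_self, inner_zero_left] at h0
    exact lt_irrefl 0 h0
  have hwY : ∀ k, w k ∉ Y := by
    intro k hk
    have h0 := hwsc k
    rw [proj_mem_self hPY hk, sub_self, inner_zero_right] at h0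
    exact lt_irrefl 0 h0
  have hdpos : ∀ k, 0 < infDist (w k) (X ∩ Y) := fun k =>
    (hSc.notMem_iff_infDist_pos hSne).1 (fun hk => hwX k hk.1)
  have hck : ∀ k, _ := fun k => hC (w k) (hwsc k)
  -- ‖w - C w‖ ≤ dist to S
  have hwc : ∀ k, ‖w k - C (w k)‖ ≤ infDist (w k) (X ∩ Y) := by
    intro k
    apply le_infDist'' hSne
    intro s hs
    rw [dist_eq_norm]
    apply obtuse_norm_le
    apply (hck k).2 s
    constructor
    · show ⟪s - PX (w k), w k - PX (w k)⟫ ≤ 0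
      have h0 := (hPX (w k)).2 s hs.1
      rwa [real_inner_comm] at h0
    · show ⟪s - PY (w k), w k - PY (w k)⟫ ≤ 0
      have h0 := (hPY (w k)).2 s hs.2
      rwa [real_inner_comm] at h0
  have hwa : ∀ k, ‖w k - PX (w k)‖ ≤ infDist (w k) (X ∩ Y) := by
    intro k
    rw [← proj_infDist hPX]
    exact infDist_le_infDist_of_subset Set.inter_subset_left hSne
  have hwb : ∀ k, ‖w k - PY (w k)‖ ≤ infDist (w k) (X ∩ Y) := by
    intro k
    rw [← proj_infDist hPY]
    exact infDist_le_infDist_of_subset Set.inter_subset_right hSne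
  have hca : ∀ k, ‖C (w k) - PX (w k)‖ ≤ 2 * infDist (w k) (X ∩ Y) := by
    intro k
    have he : C (w k) - PX (w k) = -(w k - C (w k)) + (w k - PX (w k)) := by abel
    rw [he]
    calc ‖-(w k - C (w k)) + (w k - PX (w k))‖
        ≤ ‖-(w k - C (w k))‖ + ‖w k - PX (w k)‖ := norm_add_le _ _
      _ = ‖w k - C (w k)‖ + ‖w k - PX (w k)‖ := by rw [norm_neg]
      _ ≤ infDist (w k) (X ∩ Y) + infDist (w k) (X ∩ Y) := add_le_add (hwc k) (hwa k)
      _ = 2 * infDist (w k) (X ∩ Y) := by ring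
  have hcb : ∀ k, ‖C (w k) - PY (w k)‖ ≤ 2 * infDist (w k) (X ∩ Y) := by
    intro k
    have he : C (w k) - PY (w k) = -(w k - C (w k)) + (w k - PY (w k)) := by abel
    rw [he]
    calc ‖-(w k - C (w k)) + (w k - PY (w k))‖
        ≤ ‖-(w k - C (w k))‖ + ‖w k - PY (w k)‖ := norm_add_le _ _
      _ = ‖w k - C (w k)‖ + ‖w k - PY (w k)‖ := by rw [norm_neg]
      _ ≤ infDist (w k) (X ∩ Y) + infDist (w k) (X ∩ Y) := add_le_add (hwc k) (hwb k)
      _ = 2 * infDist (w k) (X ∩ Y) := by ring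
  -- C (w k) converges to zbar
  have hdlez : ∀ k, infDist (w k) (X ∩ Y) ≤ dist (w k) zbar := fun k =>
    infDist_le_dist_of_mem hzS
  have hclim : Tendsto (fun k => C (w k)) atTop (𝓝 zbar) := by
    rw [tendsto_iff_dist_tendsto_zero]
    have hw0 : Tendsto (fun k => dist (w k) zbar) atTop (𝓝 0) :=
      tendsto_iff_dist_tendsto_zero.1 hwlim
    have hlim2 : Tendsto (fun k => 2 * dist (w k) zbar) atTop (𝓝 0) := by
      simpa using hw0.const_mul 2
    refine squeeze_zero (fun k => dist_nonneg) (fun k => ?_) hlim2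
    calc dist (C (w k)) zbar ≤ dist (C (w k)) (w k) + dist (w k) zbar := dist_triangle _ _ _
      _ = ‖w k - C (w k)‖ + dist (w k) zbar := by rw [dist_comm, dist_eq_norm]
      _ ≤ infDist (w k) (X ∩ Y) + dist (w k) zbar := by linarith [hwc k]
      _ ≤ 2 * dist (w k) zbar := by linarith [hdlez k]
  -- apply the one-set lemma to X and Y
  obtain ⟨BX, hBXnn, hBXlim, hBXev⟩ :=
    aux_seq hXc hPX hgX hzbar.1 hU hXbd hgradX hδpos
      (fun x hx => (hballS hx).1) hwlim hclim hwX (fun k => (hck k).1.1)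
  obtain ⟨BY, hBYnn, hBYlim, hBYev⟩ :=
    aux_seq hYc hPY hgY hzbar.2 hU hYbd hgradY hδpos
      (fun x hx => (hballS hx).2) hwlim hclim hwY (fun k => (hck k).1.2)
  have hEV : ∀ᶠ k in atTop, C (w k) ∈ V := hclim hV
  -- final squeeze
  have hlimB : Tendsto (fun k => 2/ω * (BX k + BY k)) atTop (𝓝 0) := by
    have := (hBXlim.add hBYlim).const_mul (2/ω)
    simpa using this
  refine squeeze_zero'
    (Filter.Eventually.of_forall fun k =>
      div_nonneg infDist_nonneg (le_of_lt (hdpos k))) ?_ hlimB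
  filter_upwards [hBXev, hBYev, hEV] with k hXk hYk hVk
  set dk : ℝ := infDist (w k) (X ∩ Y) with hdk
  have h1 : ω * infDist (C (w k)) (X ∩ Y) ≤ max (infDist (C (w k)) X) (infDist (C (w k)) Y) :=
    hEB _ hVk
  have h2 : infDist (C (w k)) X ≤ 2 * dk * (BX k + BY k) :=
    calc infDist (C (w k)) X ≤ ‖C (w k) - PX (w k)‖ * BX k := hXk
      _ ≤ (2 * dk) * (BX k + BY k) :=
          mul_le_mul (hca k) (le_add_of_nonneg_right (hBYnn k)) (hBXnn k)
            (by rw [hdk]; linarith [hdpos k])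
  have h3 : infDist (C (w k)) Y ≤ 2 * dk * (BX k + BY k) :=
    calc infDist (C (w k)) Y ≤ ‖C (w k) - PY (w k)‖ * BY k := hYk
      _ ≤ (2 * dk) * (BX k + BY k) :=
          mul_le_mul (hcb k) (le_add_of_nonneg_left (hBXnn k)) (hBYnn k)
            (by rw [hdk]; linarith [hdpos k])
  have h4 : max (infDist (C (w k)) X) (infDist (C (w k)) Y) ≤ 2 * dk * (BX k + BY k) :=
    max_le h2 h3
  have h5 : ω * infDist (C (w k)) (X ∩ Y) ≤ 2 * dk * (BX k + BY k) := le_trans h1 h4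
  rw [div_le_iff₀ (hdpos k)]
  rw [div_mul_eq_mul_div, div_mul_eq_mul_div, le_div_iff₀ hωpos]
  nlinarith [h5]
end
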